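/- arXiv:2107.01509 — 4 statements merged into one kernel-verified Lean document; each statement's English description precedes it below -/
import Mathlib

section
/- Coupled transport form of total variation: let P and P' be joint distributions of a pair of random variables (X,Y) with coinciding marginals in the first variable, P(X) = P'(X). Then there exists a probability distribution Q over triples (X,Y,Y') whose marginals satisfy Q(X,Y) = P(X,Y) and Q(X,Y') = P'(X,Y), and for which Q[Y ≠ Y'] = TV(P(X,Y) ∥ P'(X,Y)). -/
open MeasureTheory ProbabilityTheory

noncomputable section

/-- Total variation distance between two measures: supremum over measurable events of the
difference of probabilities. -/
def TV {Ω : Type*} [MeasurableSpace Ω] (P Q : Measure Ω) : ℝ :=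
  ⨆ s : {s : Set Ω // MeasurableSet s}, |(P s.1).toReal - (Q s.1).toReal|

set_option linter.unusedSectionVars false

namespace TVaux

open Set
open scoped ENNReal

variable {α β : Type*} [MeasurableSpace α] [MeasurableSpace β]
  [MeasurableSpace.CountablyGenerated β]

variable (κ κ' : Kernel α β)

/-- truncated density of `κ` w.r.t. `κ + κ'`. -/
def f1 : α → β → ℝ≥0∞ := fun x y => min (Kernel.rnDeriv κ (κ + κ') x y) 1

/-- truncated density of `κ'` w.r.t. `κ + κ'`. -/
def f2 : α → β → ℝ≥0∞ := fun x y => min (Kernel.rnDeriv κ' (κ + κ') x y) 1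

/-- minimum of the two densities. -/
def g0 : α → β → ℝ≥0∞ := fun x y => min (f1 κ κ' x y) (f2 κ κ' x y)

lemma meas_f1 : Measurable (Function.uncurry (f1 κ κ')) :=
  (Kernel.measurable_rnDeriv _ _).min measurable_const

lemma meas_f2 : Measurable (Function.uncurry (f2 κ κ')) :=
  (Kernel.measurable_rnDeriv _ _).min measurable_const

lemma meas_g0 : Measurable (Function.uncurry (g0 κ κ')) :=
  (meas_f1 κ κ').min (meas_f2 κ κ')

lemma meas_f1_right (x : α) : Measurable (f1 κ κ' x) :=
  (meas_f1 κ κ').comp measurable_prodMk_left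

lemma meas_f2_right (x : α) : Measurable (f2 κ κ' x) :=
  (meas_f2 κ κ').comp measurable_prodMk_left

lemma meas_g0_right (x : α) : Measurable (g0 κ κ' x) :=
  (meas_g0 κ κ').comp measurable_prodMk_left

lemma meas_sub1 : Measurable (Function.uncurry (fun x y => f1 κ κ' x y - g0 κ κ' x y)) := by
  simp only [Function.uncurry_def]
  exact ((meas_f1 κ κ').comp measurable_id).sub (meas_g0 κ κ')

lemma meas_sub2 : Measurable (Function.uncurry (fun x y => f2 κ κ' x y - g0 κ κ' x y)) := by
  simp only [Function.uncurry_def]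
  exact ((meas_f2 κ κ').comp measurable_id).sub (meas_g0 κ κ')

lemma g0_le_f1 (x : α) (y : β) : g0 κ κ' x y ≤ f1 κ κ' x y := min_le_left _ _

lemma g0_le_f2 (x : α) (y : β) : g0 κ κ' x y ≤ f2 κ κ' x y := min_le_right _ _

lemma f1_le_one (x : α) (y : β) : f1 κ κ' x y ≤ 1 := min_le_right _ _

lemma f2_le_one (x : α) (y : β) : f2 κ κ' x y ≤ 1 := min_le_right _ _

variable [IsFiniteKernel κ] [IsFiniteKernel κ']

/-- kernel of minimum measures. -/
def mK : Kernel α β := Kernel.withDensity (κ + κ') (g0 κ κ')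

/-- residual kernel of `κ`. -/
def rK1 : Kernel α β := Kernel.withDensity (κ + κ') (fun x y => f1 κ κ' x y - g0 κ κ' x y)

/-- residual kernel of `κ'`. -/
def rK2 : Kernel α β := Kernel.withDensity (κ + κ') (fun x y => f2 κ κ' x y - g0 κ κ' x y)

instance : IsFiniteKernel (mK κ κ') :=
  Kernel.isFiniteKernel_withDensity_of_bounded _ (B := 1) ENNReal.one_ne_top
    (fun x y => le_trans (g0_le_f1 κ κ' x y) (f1_le_one κ κ' x y))

instance : IsFiniteKernel (rK1 κ κ') := by
  refine Kernel.isFiniteKernel_withDensity_of_bounded _ (B := 1) ENNReal.one_ne_top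
    fun x y => ?_
  exact le_trans tsub_le_self (f1_le_one κ κ' x y)

instance : IsFiniteKernel (rK2 κ κ') := by
  refine Kernel.isFiniteKernel_withDensity_of_bounded _ (B := 1) ENNReal.one_ne_top
    fun x y => ?_
  exact le_trans tsub_le_self (f2_le_one κ κ' x y)

lemma mK_apply (x : α) : mK κ κ' x = ((κ + κ') x).withDensity (g0 κ κ' x) :=
  Kernel.withDensity_apply _ (meas_g0 κ κ') x

lemma rK1_apply (x : α) :
    rK1 κ κ' x = ((κ + κ') x).withDensity (fun y => f1 κ κ' x y - g0 κ κ' x y) :=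
  Kernel.withDensity_apply _ (meas_sub1 κ κ') x

lemma rK2_apply (x : α) :
    rK2 κ κ' x = ((κ + κ') x).withDensity (fun y => f2 κ κ' x y - g0 κ κ' x y) :=
  Kernel.withDensity_apply _ (meas_sub2 κ κ') x

lemma wd_f1 (x : α) : ((κ + κ') x).withDensity (f1 κ κ' x) = κ x := by
  have hle : κ x ≤ (κ + κ') x := by
    rw [Kernel.add_apply]; exact Measure.le_add_right le_rfl
  have hac : κ x ≪ (κ + κ') x := Measure.absolutelyContinuous_of_le hle
  have h1 : f1 κ κ' x =ᵐ[(κ + κ') x] Kernel.rnDeriv κ (κ + κ') x := by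
    filter_upwards [Kernel.rnDeriv_eq_rnDeriv_measure (κ := κ) (η := κ + κ') (a := x),
      Measure.rnDeriv_le_one_of_le hle] with y h2 h3
    simp only [f1]
    rw [h2]
    exact min_eq_left (h2 ▸ h3)
  rw [withDensity_congr_ae h1,
    ← Kernel.withDensity_apply _ (Kernel.measurable_rnDeriv _ _),
    Kernel.withDensity_rnDeriv_eq hac]

lemma wd_f2 (x : α) : ((κ + κ') x).withDensity (f2 κ κ' x) = κ' x := by
  have hle : κ' x ≤ (κ + κ') x := by
    rw [Kernel.add_apply]; exact Measure.le_add_left le_rfl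
  have hac : κ' x ≪ (κ + κ') x := Measure.absolutelyContinuous_of_le hle
  have h1 : f2 κ κ' x =ᵐ[(κ + κ') x] Kernel.rnDeriv κ' (κ + κ') x := by
    filter_upwards [Kernel.rnDeriv_eq_rnDeriv_measure (κ := κ') (η := κ + κ') (a := x),
      Measure.rnDeriv_le_one_of_le hle] with y h2 h3
    simp only [f2]
    rw [h2]
    exact min_eq_left (h2 ▸ h3)
  rw [withDensity_congr_ae h1,
    ← Kernel.withDensity_apply _ (Kernel.measurable_rnDeriv _ _),
    Kernel.withDensity_rnDeriv_eq hac]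

lemma mK_add_rK1 (x : α) : mK κ κ' x + rK1 κ κ' x = κ x := by
  rw [mK_apply, rK1_apply,
    ← withDensity_add_right _ (g := fun y => f1 κ κ' x y - g0 κ κ' x y)
      ((meas_f1_right κ κ' x).sub (meas_g0_right κ κ' x)),
    ← wd_f1 κ κ' x]
  congr 1
  funext y
  exact add_tsub_cancel_of_le (g0_le_f1 κ κ' x y)

lemma mK_add_rK2 (x : α) : mK κ κ' x + rK2 κ κ' x = κ' x := by
  rw [mK_apply, rK2_apply,
    ← withDensity_add_right _ (g := fun y => f2 κ κ' x y - g0 κ κ' x y)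
      ((meas_f2_right κ κ' x).sub (meas_g0_right κ κ' x)),
    ← wd_f2 κ κ' x]
  congr 1
  funext y
  exact add_tsub_cancel_of_le (g0_le_f2 κ κ' x y)

section Markov

variable [IsMarkovKernel κ] [IsMarkovKernel κ']

lemma a_add_r1 (x : α) : mK κ κ' x Set.univ + rK1 κ κ' x Set.univ = 1 := by
  have h := congrArg (fun m : Measure β => m Set.univ) (mK_add_rK1 κ κ' x)
  simpa [Measure.add_apply] using h

lemma a_add_r2 (x : α) : mK κ κ' x Set.univ + rK2 κ κ' x Set.univ = 1 := by
  have h := congrArg (fun m : Measure β => m Set.univ) (mK_add_rK2 κ κ' x)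
  simpa [Measure.add_apply] using h

lemma a_le_one (x : α) : mK κ κ' x Set.univ ≤ 1 := by
  rw [← a_add_r1 κ κ' x]; exact le_self_add

lemma a_ne_top (x : α) : mK κ κ' x Set.univ ≠ ∞ :=
  ne_top_of_le_ne_top ENNReal.one_ne_top (a_le_one κ κ' x)

lemma r1_univ (x : α) : rK1 κ κ' x Set.univ = 1 - mK κ κ' x Set.univ := by
  refine ENNReal.eq_sub_of_add_eq (a_ne_top κ κ' x) ?_
  rw [add_comm]; exact a_add_r1 κ κ' x

lemma r2_univ (x : α) : rK2 κ κ' x Set.univ = 1 - mK κ κ' x Set.univ := by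
  refine ENNReal.eq_sub_of_add_eq (a_ne_top κ κ' x) ?_
  rw [add_comm]; exact a_add_r2 κ κ' x

/-- the set where the first density strictly exceeds the second. -/
def Aset (x : α) : Set β := {y | f2 κ κ' x y < f1 κ κ' x y}

lemma measurableSet_Aset (x : α) : MeasurableSet (Aset κ κ' x) :=
  measurableSet_lt (meas_f2_right κ κ' x) (meas_f1_right κ κ' x)

lemma rK2_Aset (x : α) : rK2 κ κ' x (Aset κ κ' x) = 0 := by
  rw [rK2_apply, MeasureTheory.withDensity_apply _ (measurableSet_Aset κ κ' x)]
  have h0 : ∀ᵐ y ∂((κ + κ') x), y ∈ Aset κ κ' x →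
      f2 κ κ' x y - g0 κ κ' x y = (0 : ℝ≥0∞) := by
    refine ae_of_all _ fun y hy => ?_
    have hlt : f2 κ κ' x y < f1 κ κ' x y := hy
    have hg : g0 κ κ' x y = f2 κ κ' x y := min_eq_right hlt.le
    rw [hg, tsub_self]
  rw [setLIntegral_congr_fun_ae (measurableSet_Aset κ κ' x) h0]
  simp

lemma rK1_compl_Aset (x : α) : rK1 κ κ' x (Aset κ κ' x)ᶜ = 0 := by
  rw [rK1_apply, MeasureTheory.withDensity_apply _ (measurableSet_Aset κ κ' x).compl]
  have h0 : ∀ᵐ y ∂((κ + κ') x), y ∈ (Aset κ κ' x)ᶜ →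
      f1 κ κ' x y - g0 κ κ' x y = (0 : ℝ≥0∞) := by
    refine ae_of_all _ fun y hy => ?_
    have hle : f1 κ κ' x y ≤ f2 κ κ' x y := not_lt.mp hy
    have hg : g0 κ κ' x y = f1 κ κ' x y := min_eq_left hle
    rw [hg, tsub_self]
  rw [setLIntegral_congr_fun_ae (measurableSet_Aset κ κ' x).compl h0]
  simp

lemma rK1_Aset (x : α) : rK1 κ κ' x (Aset κ κ' x) = 1 - mK κ κ' x Set.univ := by
  have h := measure_add_measure_compl (μ := rK1 κ κ' x) (measurableSet_Aset κ κ' x)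
  rw [rK1_compl_Aset, add_zero] at h
  rw [h, r1_univ]

lemma prod_diag (x : α) :
    ((rK1 κ κ' x).prod (rK2 κ κ' x)) {q : β × β | q.1 = q.2} = 0 := by
  have hsub : {q : β × β | q.1 = q.2} ⊆
      (Aset κ κ' x ×ˢ Aset κ κ' x) ∪ ((Aset κ κ' x)ᶜ ×ˢ Set.univ) := by
    rintro ⟨y, z⟩ hq
    simp only [Set.mem_setOf_eq] at hq
    by_cases hy : y ∈ Aset κ κ' x
    · exact Or.inl ⟨hy, hq ▸ hy⟩
    · exact Or.inr ⟨hy, Set.mem_univ _⟩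
  refine measure_mono_null hsub ?_
  refine le_antisymm (le_trans (measure_union_le _ _) ?_) zero_le
  simp [Measure.prod_prod, rK2_Aset, rK1_compl_Aset]

lemma meas_diag : Measurable (fun y : β => (y, y)) := measurable_id.prodMk measurable_id

/-- auxiliary cancellation in `ℝ≥0∞`. -/
lemma cancel_aux {a b : ℝ≥0∞} (hb : b ≤ 1 - a) : (1 - a)⁻¹ * (b * (1 - a)) = b := by
  by_cases h : (1 : ℝ≥0∞) - a = 0
  · have hb0 : b = 0 := le_antisymm (h ▸ hb) zero_le
    simp [hb0]
  · have hne : (1 : ℝ≥0∞) - a ≠ ∞ := ne_top_of_le_ne_top ENNReal.one_ne_top tsub_le_self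
    rw [mul_comm b, ← mul_assoc, ENNReal.inv_mul_cancel h hne, one_mul]

/-- The coupling kernel: diagonal on the common part, independent residual coupling off it. -/
def QK : Kernel α (β × β) where
  toFun x := (mK κ κ' x).map (fun y => (y, y)) +
    ((1 - mK κ κ' x Set.univ)⁻¹) • ((rK1 κ κ' x).prod (rK2 κ κ' x))
  measurable' := by
    refine Measure.measurable_of_measurable_coe _ fun s hs => ?_
    simp only [Measure.coe_add, Pi.add_apply,
      Measure.map_apply meas_diag hs,
      Measure.smul_apply, smul_eq_mul]
    have h1 : Measurable fun x => mK κ κ' x ((fun y : β => (y, y)) ⁻¹' s) :=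
      Kernel.measurable_coe _ (hs.preimage meas_diag)
    have h2 : Measurable fun x => ((rK1 κ κ' x).prod (rK2 κ κ' x)) s := by
      have h := Kernel.measurable_coe (rK1 κ κ' ×ₖ rK2 κ κ') hs
      simpa only [Kernel.prod_apply] using h
    exact h1.add
      (((measurable_const.sub (Kernel.measurable_coe _ MeasurableSet.univ)).inv).mul h2)

lemma QK_apply (x : α) : QK κ κ' x = (mK κ κ' x).map (fun y => (y, y)) +
    ((1 - mK κ κ' x Set.univ)⁻¹) • ((rK1 κ κ' x).prod (rK2 κ κ' x)) := rfl

lemma QK_fst (x : α) (t : Set β) (ht : MeasurableSet t) :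
    QK κ κ' x (Prod.fst ⁻¹' t) = κ x t := by
  have hpre : MeasurableSet (Prod.fst ⁻¹' t : Set (β × β)) := ht.preimage measurable_fst
  rw [QK_apply, Measure.add_apply,
    Measure.map_apply meas_diag hpre,
    Measure.smul_apply, smul_eq_mul]
  have hdiag : (fun y : β => (y, y)) ⁻¹' (Prod.fst ⁻¹' t) = t := rfl
  have hprodset : (Prod.fst ⁻¹' t : Set (β × β)) = t ×ˢ Set.univ := (Set.prod_univ).symm
  rw [hdiag, hprodset, Measure.prod_prod, r2_univ]
  have hb : rK1 κ κ' x t ≤ 1 - mK κ κ' x Set.univ := by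
    rw [← r1_univ]; exact measure_mono (Set.subset_univ t)
  rw [cancel_aux hb]
  have h := congrArg (fun m : Measure β => m t) (mK_add_rK1 κ κ' x)
  simpa [Measure.add_apply] using h

lemma QK_snd (x : α) (t : Set β) (ht : MeasurableSet t) :
    QK κ κ' x (Prod.snd ⁻¹' t) = κ' x t := by
  have hpre : MeasurableSet (Prod.snd ⁻¹' t : Set (β × β)) := ht.preimage measurable_snd
  rw [QK_apply, Measure.add_apply,
    Measure.map_apply meas_diag hpre,
    Measure.smul_apply, smul_eq_mul]
  have hdiag : (fun y : β => (y, y)) ⁻¹' (Prod.snd ⁻¹' t) = t := rfl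
  have hprodset : (Prod.snd ⁻¹' t : Set (β × β)) = Set.univ ×ˢ t := (Set.univ_prod).symm
  rw [hdiag, hprodset, Measure.prod_prod, r1_univ]
  have hb : rK2 κ κ' x t ≤ 1 - mK κ κ' x Set.univ := by
    rw [← r2_univ]; exact measure_mono (Set.subset_univ t)
  rw [mul_comm ((1 : ℝ≥0∞) - mK κ κ' x Set.univ) (rK2 κ κ' x t), cancel_aux hb]
  have h := congrArg (fun m : Measure β => m t) (mK_add_rK2 κ κ' x)
  simpa [Measure.add_apply] using h

lemma QK_univ (x : α) : QK κ κ' x Set.univ = 1 := by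
  have h := QK_fst κ κ' x Set.univ MeasurableSet.univ
  simpa using h

instance : IsMarkovKernel (QK κ κ') := ⟨fun x => ⟨QK_univ κ κ' x⟩⟩

lemma QK_ne (hD : MeasurableSet {q : β × β | q.1 = q.2}) (x : α) :
    QK κ κ' x {q : β × β | q.1 ≠ q.2} = 1 - mK κ κ' x Set.univ := by
  have hset : {q : β × β | q.1 ≠ q.2} = {q : β × β | q.1 = q.2}ᶜ := rfl
  rw [hset, QK_apply, Measure.add_apply,
    Measure.map_apply meas_diag hD.compl,
    Measure.smul_apply, smul_eq_mul]
  have hdiag : (fun y : β => (y, y)) ⁻¹' ({q : β × β | q.1 = q.2}ᶜ) = ∅ := by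
    ext y; simp
  have hcompl : ((rK1 κ κ' x).prod (rK2 κ κ' x)) ({q : β × β | q.1 = q.2}ᶜ)
      = (1 - mK κ κ' x Set.univ) * (1 - mK κ κ' x Set.univ) := by
    rw [measure_compl hD (by rw [prod_diag]; exact ENNReal.zero_ne_top), prod_diag, tsub_zero]
    rw [show (Set.univ : Set (β × β)) = Set.univ ×ˢ Set.univ from (Set.univ_prod_univ).symm,
      Measure.prod_prod, r1_univ, r2_univ]
  rw [hdiag, hcompl, cancel_aux le_rfl]
  simp

theorem core (hD : MeasurableSet {q : β × β | q.1 = q.2})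
    (μ : Measure α) [IsProbabilityMeasure μ] :
    ∃ Q : Measure (α × β × β), IsProbabilityMeasure Q ∧
      Q.map (fun p => (p.1, p.2.1)) = μ ⊗ₘ κ ∧
      Q.map (fun p => (p.1, p.2.2)) = μ ⊗ₘ κ' ∧
      (Q {p | p.2.1 ≠ p.2.2}).toReal = TV (μ ⊗ₘ κ) (μ ⊗ₘ κ') := by
  classical
  set P : Measure (α × β) := μ ⊗ₘ κ with hP
  set P' : Measure (α × β) := μ ⊗ₘ κ' with hP'
  set I : ℝ≥0∞ := ∫⁻ x, mK κ κ' x Set.univ ∂μ with hIdef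
  have hameas : Measurable fun x => mK κ κ' x Set.univ :=
    Kernel.measurable_coe _ MeasurableSet.univ
  have hIle : I ≤ 1 := by
    rw [hIdef]
    calc ∫⁻ x, mK κ κ' x Set.univ ∂μ ≤ ∫⁻ _, 1 ∂μ :=
          lintegral_mono fun x => a_le_one κ κ' x
    _ = 1 := by simp
  have hIne : I ≠ ∞ := ne_top_of_le_ne_top ENNReal.one_ne_top hIle
  have h1I_ne : (1 : ℝ≥0∞) - I ≠ ∞ := ne_top_of_le_ne_top ENNReal.one_ne_top tsub_le_self
  have hsub : ∫⁻ x, (1 - mK κ κ' x Set.univ) ∂μ = 1 - I := by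
    rw [lintegral_sub hameas hIne (ae_of_all _ fun x => a_le_one κ κ' x)]
    simp [hIdef]
  -- sectionwise inequality
  have hsec : ∀ (x : α) (t : Set β),
      κ x t ≤ κ' x t + (1 - mK κ κ' x Set.univ) := by
    intro x t
    have h1 := congrArg (fun m : Measure β => m t) (mK_add_rK1 κ κ' x)
    have h2 := congrArg (fun m : Measure β => m t) (mK_add_rK2 κ κ' x)
    simp only [Measure.add_apply] at h1 h2
    have hr1 : rK1 κ κ' x t ≤ 1 - mK κ κ' x Set.univ := by
      rw [← r1_univ]; exact measure_mono (Set.subset_univ t)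
    calc κ x t = mK κ κ' x t + rK1 κ κ' x t := h1.symm
    _ ≤ mK κ κ' x t + (1 - mK κ κ' x Set.univ) := add_le_add_right hr1 _
    _ ≤ (mK κ κ' x t + rK2 κ κ' x t) + (1 - mK κ κ' x Set.univ) := by
        exact add_le_add_left le_self_add _
    _ = κ' x t + (1 - mK κ κ' x Set.univ) := by rw [h2]
  have hsec' : ∀ (x : α) (t : Set β),
      κ' x t ≤ κ x t + (1 - mK κ κ' x Set.univ) := by
    intro x t
    have h1 := congrArg (fun m : Measure β => m t) (mK_add_rK1 κ κ' x)
    have h2 := congrArg (fun m : Measure β => m t) (mK_add_rK2 κ κ' x)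
    simp only [Measure.add_apply] at h1 h2
    have hr2 : rK2 κ κ' x t ≤ 1 - mK κ κ' x Set.univ := by
      rw [← r2_univ]; exact measure_mono (Set.subset_univ t)
    calc κ' x t = mK κ κ' x t + rK2 κ κ' x t := h2.symm
    _ ≤ mK κ κ' x t + (1 - mK κ κ' x Set.univ) := add_le_add_right hr2 _
    _ ≤ (mK κ κ' x t + rK1 κ κ' x t) + (1 - mK κ κ' x Set.univ) := by
        exact add_le_add_left le_self_add _
    _ = κ x t + (1 - mK κ κ' x Set.univ) := by rw [h1]
  -- global inequalities
  have hPP' : ∀ s : Set (α × β), MeasurableSet s → P s ≤ P' s + (1 - I) := by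
    intro s hs
    rw [hP, hP', Measure.compProd_apply hs, Measure.compProd_apply hs]
    calc ∫⁻ x, κ x (Prod.mk x ⁻¹' s) ∂μ
        ≤ ∫⁻ x, (κ' x (Prod.mk x ⁻¹' s) + (1 - mK κ κ' x Set.univ)) ∂μ :=
          lintegral_mono fun x => hsec x _
    _ = (∫⁻ x, κ' x (Prod.mk x ⁻¹' s) ∂μ) + ∫⁻ x, (1 - mK κ κ' x Set.univ) ∂μ :=
          lintegral_add_right _ (measurable_const.sub hameas)
    _ = (∫⁻ x, κ' x (Prod.mk x ⁻¹' s) ∂μ) + (1 - I) := by rw [hsub]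
  have hP'P : ∀ s : Set (α × β), MeasurableSet s → P' s ≤ P s + (1 - I) := by
    intro s hs
    rw [hP, hP', Measure.compProd_apply hs, Measure.compProd_apply hs]
    calc ∫⁻ x, κ' x (Prod.mk x ⁻¹' s) ∂μ
        ≤ ∫⁻ x, (κ x (Prod.mk x ⁻¹' s) + (1 - mK κ κ' x Set.univ)) ∂μ :=
          lintegral_mono fun x => hsec' x _
    _ = (∫⁻ x, κ x (Prod.mk x ⁻¹' s) ∂μ) + ∫⁻ x, (1 - mK κ κ' x Set.univ) ∂μ :=
          lintegral_add_right _ (measurable_const.sub hameas)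
    _ = (∫⁻ x, κ x (Prod.mk x ⁻¹' s) ∂μ) + (1 - I) := by rw [hsub]
  -- the optimal set
  set sstar : Set (α × β) := {p : α × β | f2 κ κ' p.1 p.2 < f1 κ κ' p.1 p.2} with hsstardef
  have hsstar : MeasurableSet sstar :=
    measurableSet_lt (meas_f2 κ κ') (meas_f1 κ κ')
  have hsecstar : ∀ x : α,
      κ x (Aset κ κ' x) = κ' x (Aset κ κ' x) + (1 - mK κ κ' x Set.univ) := by
    intro x
    have h1 := congrArg (fun m : Measure β => m (Aset κ κ' x)) (mK_add_rK1 κ κ' x)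
    have h2 := congrArg (fun m : Measure β => m (Aset κ κ' x)) (mK_add_rK2 κ κ' x)
    simp only [Measure.add_apply] at h1 h2
    rw [← h1, ← h2, rK1_Aset, rK2_Aset, add_zero]
  have hpre_star : ∀ x : α, Prod.mk x ⁻¹' sstar = Aset κ κ' x := fun x => rfl
  have hstar : P sstar = P' sstar + (1 - I) := by
    rw [hP, hP', Measure.compProd_apply hsstar, Measure.compProd_apply hsstar]
    calc ∫⁻ x, κ x (Prod.mk x ⁻¹' sstar) ∂μ
        = ∫⁻ x, (κ' x (Prod.mk x ⁻¹' sstar) + (1 - mK κ κ' x Set.univ)) ∂μ := by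
          refine lintegral_congr fun x => ?_
          rw [hpre_star x]
          exact hsecstar x
    _ = (∫⁻ x, κ' x (Prod.mk x ⁻¹' sstar) ∂μ) + ∫⁻ x, (1 - mK κ κ' x Set.univ) ∂μ :=
          lintegral_add_right _ (measurable_const.sub hameas)
    _ = (∫⁻ x, κ' x (Prod.mk x ⁻¹' sstar) ∂μ) + (1 - I) := by rw [hsub]
  -- real-valued bound
  haveI : IsProbabilityMeasure P := by rw [hP]; infer_instance
  haveI : IsProbabilityMeasure P' := by rw [hP']; infer_instance
  have habs : ∀ s : Set (α × β), MeasurableSet s →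
      |(P s).toReal - (P' s).toReal| ≤ ((1 : ℝ≥0∞) - I).toReal := by
    intro s hs
    rw [abs_sub_le_iff]
    constructor
    · have h := ENNReal.toReal_mono
        (ENNReal.add_ne_top.mpr ⟨measure_ne_top _ _, h1I_ne⟩) (hPP' s hs)
      rw [ENNReal.toReal_add (measure_ne_top _ _) h1I_ne] at h
      linarith
    · have h := ENNReal.toReal_mono
        (ENNReal.add_ne_top.mpr ⟨measure_ne_top _ _, h1I_ne⟩) (hP'P s hs)
      rw [ENNReal.toReal_add (measure_ne_top _ _) h1I_ne] at h
      linarith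
  -- TV value
  haveI : Nonempty {s : Set (α × β) // MeasurableSet s} := ⟨⟨∅, MeasurableSet.empty⟩⟩
  have hTV : TV P P' = ((1 : ℝ≥0∞) - I).toReal := by
    refine le_antisymm (ciSup_le fun s => habs s.1 s.2) ?_
    have hBdd : BddAbove (Set.range fun s : {s : Set (α × β) // MeasurableSet s} =>
        |(P s.1).toReal - (P' s.1).toReal|) := by
      refine ⟨((1 : ℝ≥0∞) - I).toReal, ?_⟩
      rintro r ⟨s, rfl⟩
      exact habs s.1 s.2
    refine le_trans ?_ (le_ciSup hBdd (⟨sstar, hsstar⟩ : {s : Set (α × β) // MeasurableSet s}))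
    have : (P sstar).toReal = (P' sstar).toReal + ((1 : ℝ≥0∞) - I).toReal := by
      rw [hstar, ENNReal.toReal_add (measure_ne_top _ _) h1I_ne]
    rw [this, add_sub_cancel_left, abs_of_nonneg ENNReal.toReal_nonneg]
  -- assemble
  refine ⟨μ ⊗ₘ QK κ κ', inferInstance, ?_, ?_, ?_⟩
  · have hF : Measurable fun p : α × β × β => (p.1, p.2.1) :=
      measurable_fst.prodMk (measurable_fst.comp measurable_snd)
    refine Measure.ext fun s hs => ?_
    rw [Measure.map_apply hF hs, Measure.compProd_apply (hs.preimage hF),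
      Measure.compProd_apply hs]
    refine lintegral_congr fun x => ?_
    have hpre : Prod.mk x ⁻¹' ((fun p : α × β × β => (p.1, p.2.1)) ⁻¹' s)
        = Prod.fst ⁻¹' (Prod.mk x ⁻¹' s) := rfl
    rw [hpre, QK_fst κ κ' x _ (hs.preimage measurable_prodMk_left)]
  · have hF : Measurable fun p : α × β × β => (p.1, p.2.2) :=
      measurable_fst.prodMk (measurable_snd.comp measurable_snd)
    refine Measure.ext fun s hs => ?_
    rw [Measure.map_apply hF hs, Measure.compProd_apply (hs.preimage hF),
      Measure.compProd_apply hs]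
    refine lintegral_congr fun x => ?_
    have hpre : Prod.mk x ⁻¹' ((fun p : α × β × β => (p.1, p.2.2)) ⁻¹' s)
        = Prod.snd ⁻¹' (Prod.mk x ⁻¹' s) := rfl
    rw [hpre, QK_snd κ κ' x _ (hs.preimage measurable_prodMk_left)]
  · have hSmeas : MeasurableSet {p : α × β × β | p.2.1 ≠ p.2.2} := by
      have hset : {p : α × β × β | p.2.1 ≠ p.2.2}
          = (fun p : α × β × β => p.2) ⁻¹' ({q : β × β | q.1 = q.2}ᶜ) := rfl
      rw [hset]
      exact hD.compl.preimage measurable_snd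
    rw [Measure.compProd_apply hSmeas]
    have hQ : ∀ x : α, QK κ κ' x (Prod.mk x ⁻¹' {p : α × β × β | p.2.1 ≠ p.2.2})
        = 1 - mK κ κ' x Set.univ := by
      intro x
      have hp : Prod.mk x ⁻¹' {p : α × β × β | p.2.1 ≠ p.2.2}
          = {q : β × β | q.1 ≠ q.2} := rfl
      rw [hp, QK_ne κ κ' hD x]
    rw [lintegral_congr hQ, hsub, hTV]

end Markov

end TVaux

theorem stmt3 {α β : Type*} [MeasurableSpace α] [MeasurableSpace β]
    [StandardBorelSpace α] [StandardBorelSpace β] [Nonempty β]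
    (P P' : Measure (α × β)) [IsProbabilityMeasure P] [IsProbabilityMeasure P']
    (hmarg : P.map Prod.fst = P'.map Prod.fst) :
    ∃ Q : Measure (α × β × β), IsProbabilityMeasure Q ∧
      Q.map (fun p => (p.1, p.2.1)) = P ∧
      Q.map (fun p => (p.1, p.2.2)) = P' ∧
      (Q {p | p.2.1 ≠ p.2.2}).toReal = TV P P' := by
  have hD : MeasurableSet {q : β × β | q.1 = q.2} := by
    letI := upgradeStandardBorel β
    exact isClosed_diagonal.measurableSet
  have hfst : P.fst = P'.fst := by
    rw [Measure.fst, Measure.fst, hmarg]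
  have hPdis : P.fst ⊗ₘ P.condKernel = P := P.disintegrate P.condKernel
  have hP'dis : P.fst ⊗ₘ P'.condKernel = P' := by
    rw [hfst]; exact P'.disintegrate P'.condKernel
  obtain ⟨Q, hQprob, hQ1, hQ2, hQTV⟩ :=
    TVaux.core P.condKernel P'.condKernel hD P.fst
  refine ⟨Q, hQprob, ?_, ?_, ?_⟩
  · rw [hQ1, hPdis]
  · rw [hQ2, hP'dis]
  · rw [hQTV, hPdis, hP'dis]

end
end

section
/- For any k ∈ ℕ and any measurable functions f_1,…,f_H : ℝ^{𝒜×k} → Δ(𝒜) (probability distributions over actions), the family of Bayesian bandit algorithms (k,f_{1:H})-PosteriorSample(·) is k-Monte Carlo. -/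
open MeasureTheory ProbabilityTheory
open scoped ENNReal

noncomputable section

/-- Bandit trajectories of length `h`: the sequence of actions and observed scalar rewards. -/
abbrev Traj (𝒜 : Type*) (h : ℕ) : Type _ := Fin h → 𝒜 × ℝ

/-- The `n`-Monte Carlo property: for any two parameters, any step and any partial trajectory,
the total variation between the action distributions is at most `n` times the total variation
between the posteriors. -/
def IsMonteCarlo {Θ 𝒜 : Type*} [MeasurableSpace 𝒜]
    (alg : Θ → (h : ℕ) → Kernel (Traj 𝒜 h) 𝒜)
    (post : Θ → (h : ℕ) → Kernel (Traj 𝒜 h) (𝒜 → ℝ)) (n : ℝ) : Prop :=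
  ∀ θ θ' (h : ℕ) (τ : Traj 𝒜 h),
    TV ((alg θ h) τ) ((alg θ' h) τ) ≤ n * TV ((post θ h) τ) ((post θ' h) τ)

/-- Core inequality: if `P s ≤ Q s + ε` for all measurable `s`, then the same holds for
lower integrals of `[0,1]`-valued measurable functions. -/
lemma lintegral_le_of_forall_meas_le {Ω : Type*} [MeasurableSpace Ω]
    (P Q : Measure Ω) [IsProbabilityMeasure P] [IsProbabilityMeasure Q]
    (g : Ω → ℝ≥0∞) (hg : Measurable g) (hg1 : ∀ x, g x ≤ 1) (ε : ℝ≥0∞)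
    (hPQ : ∀ s, MeasurableSet s → P s ≤ Q s + ε) :
    ∫⁻ x, g x ∂P ≤ ∫⁻ x, g x ∂Q + ε := by
  set g' : Ω → ℝ := fun x => (g x).toReal with hg'def
  have hg' : Measurable g' := ENNReal.measurable_toReal.comp hg
  have hgg : ∀ x, g x = ENNReal.ofReal (g' x) := fun x =>
    (ENNReal.ofReal_toReal (ne_top_of_le_ne_top ENNReal.one_ne_top (hg1 x))).symm
  have hg'1 : ∀ x, g' x ≤ 1 := fun x => by
    have := hg1 x
    simpa [hg'def] using ENNReal.toReal_mono ENNReal.one_ne_top this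
  have key : ∀ μ : Measure Ω, ∫⁻ x, g x ∂μ = ∫⁻ t in Set.Ioi (0:ℝ), μ {a | t < g' a} := by
    intro μ
    simp_rw [hgg]
    exact lintegral_eq_lintegral_meas_lt μ (Filter.Eventually.of_forall fun x =>
      ENNReal.toReal_nonneg) hg'.aemeasurable
  rw [key P, key Q]
  have step : ∫⁻ t in Set.Ioi (0:ℝ), P {a | t < g' a}
      ≤ ∫⁻ t in Set.Ioi (0:ℝ),
        (Q {a | t < g' a} + Set.indicator (Set.Ioo (0:ℝ) 1) (fun _ => ε) t) := by
    refine lintegral_mono_ae ?_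
    filter_upwards [ae_restrict_mem measurableSet_Ioi] with t ht
    rcases lt_or_ge t 1 with h1 | h1
    · have : Set.indicator (Set.Ioo (0:ℝ) 1) (fun _ => ε) t = ε := by
        rw [Set.indicator_of_mem (Set.mem_Ioo.mpr ⟨ht, h1⟩)]
      rw [this]
      exact hPQ _ (measurableSet_lt measurable_const hg')
    · have hempty : {a | t < g' a} = (∅ : Set Ω) := by
        ext a; simp only [Set.mem_setOf_eq, Set.mem_empty_iff_false, iff_false, not_lt]
        exact (hg'1 a).trans h1
      rw [hempty]
      simp
  refine step.trans ?_
  rw [lintegral_add_right _ (measurable_const.indicator measurableSet_Ioo)]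
  gcongr
  rw [lintegral_indicator measurableSet_Ioo, setLIntegral_const,
    Measure.restrict_apply measurableSet_Ioo]
  have : Set.Ioo (0:ℝ) 1 ∩ Set.Ioi 0 = Set.Ioo 0 1 := by
    apply Set.inter_eq_left.mpr; intro x hx; exact hx.1
  rw [this, Real.volume_Ioo]
  norm_num

/-- Hybrid argument: the bound propagates to `n`-fold products, with factor `n`. -/
lemma lintegral_pi_le {β : Type*} [MeasurableSpace β] :
    ∀ (n : ℕ) (P Q : Measure β), IsProbabilityMeasure P → IsProbabilityMeasure Q →
    ∀ (ε : ℝ≥0∞), (∀ s, MeasurableSet s → P s ≤ Q s + ε) →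
    ∀ (g : (Fin n → β) → ℝ≥0∞), Measurable g → (∀ x, g x ≤ 1) →
    ∫⁻ x, g x ∂(Measure.pi fun _ : Fin n => P) ≤
      ∫⁻ x, g x ∂(Measure.pi fun _ : Fin n => Q) + n * ε := by
  intro n
  induction n with
  | zero =>
    intro P Q hP hQ ε hPQ g hg hg1
    haveI := hP; haveI := hQ
    rw [Measure.pi_of_empty, Measure.pi_of_empty]
    simp
  | succ n ih =>
    intro P Q hP hQ ε hPQ g hg hg1
    haveI := hP; haveI := hQ
    set e := MeasurableEquiv.piFinSuccAbove (fun _ : Fin (n + 1) => β) 0 with he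
    have hA : ∀ (μ : Measure β), IsProbabilityMeasure μ →
        ∫⁻ x, g x ∂(Measure.pi fun _ : Fin (n + 1) => μ) =
        ∫⁻ x, ∫⁻ y, g (e.symm (x, y)) ∂(Measure.pi fun _ : Fin n => μ) ∂μ := by
      intro μ hμ
      haveI := hμ
      have hmp := measurePreserving_piFinSuccAbove (fun _ : Fin (n + 1) => μ) 0
      have hcomp := (hmp.symm e).lintegral_comp hg
      rw [← hcomp]
      exact lintegral_prod _ ((hg.comp e.symm.measurable).aemeasurable)
    have hGm : Measurable fun p : β × (Fin n → β) => g (e.symm p) :=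
      hg.comp e.symm.measurable
    have hQm : Measurable fun x => ∫⁻ y, g (e.symm (x, y)) ∂(Measure.pi fun _ : Fin n => Q) :=
      hGm.lintegral_prod_right'
    have hQ1 : ∀ x, (∫⁻ y, g (e.symm (x, y)) ∂(Measure.pi fun _ : Fin n => Q)) ≤ 1 := by
      intro x
      calc ∫⁻ y, g (e.symm (x, y)) ∂(Measure.pi fun _ : Fin n => Q)
          ≤ ∫⁻ _, 1 ∂(Measure.pi fun _ : Fin n => Q) := lintegral_mono fun y => hg1 _
        _ = 1 := by simp
    calc ∫⁻ x, g x ∂(Measure.pi fun _ : Fin (n + 1) => P)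
        = ∫⁻ x, ∫⁻ y, g (e.symm (x, y)) ∂(Measure.pi fun _ : Fin n => P) ∂P := hA P hP
      _ ≤ ∫⁻ x, (∫⁻ y, g (e.symm (x, y)) ∂(Measure.pi fun _ : Fin n => Q) + n * ε) ∂P := by
          refine lintegral_mono fun x => ?_
          exact ih P Q hP hQ ε hPQ _
            (hGm.comp (measurable_prodMk_left)) (fun y => hg1 _)
      _ = ∫⁻ x, ∫⁻ y, g (e.symm (x, y)) ∂(Measure.pi fun _ : Fin n => Q) ∂P + n * ε := by
          rw [lintegral_add_right _ measurable_const, lintegral_const, measure_univ, mul_one]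
      _ ≤ (∫⁻ x, ∫⁻ y, g (e.symm (x, y)) ∂(Measure.pi fun _ : Fin n => Q) ∂Q + ε) + n * ε := by
          gcongr
          exact lintegral_le_of_forall_meas_le P Q _ hQm hQ1 ε hPQ
      _ = ∫⁻ x, g x ∂(Measure.pi fun _ : Fin (n + 1) => Q) + (n + 1 : ℕ) * ε := by
          rw [← hA Q hQ]
          push_cast
          ring
theorem stmt13 {Θ 𝒜 : Type*} [MeasurableSpace 𝒜] (k : ℕ)
    (f : (h : ℕ) → (Fin k → 𝒜 → ℝ) → Measure 𝒜)
    (hfm : ∀ h, Measurable (f h)) (hfp : ∀ h ms, IsProbabilityMeasure (f h ms))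
    (post : Θ → (h : ℕ) → Kernel (Traj 𝒜 h) (𝒜 → ℝ))
    (hpostM : ∀ θ h, IsMarkovKernel (post θ h))
    (alg : Θ → (h : ℕ) → Kernel (Traj 𝒜 h) 𝒜)
    (halg : ∀ θ (h : ℕ) (τ : Traj 𝒜 h),
      (alg θ h) τ = (Measure.pi fun _ : Fin k => (post θ h) τ).bind (f h)) :
    IsMonteCarlo alg post (k : ℝ) := by
  intro θ θ' h τ
  haveI := hpostM θ h
  haveI := hpostM θ' h
  set P : Measure (𝒜 → ℝ) := (post θ h) τ with hP
  set Q : Measure (𝒜 → ℝ) := (post θ' h) τ with hQ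
  haveI : IsProbabilityMeasure P := (hpostM θ h).isProbabilityMeasure τ
  haveI : IsProbabilityMeasure Q := (hpostM θ' h).isProbabilityMeasure τ
  set t : ℝ := TV P Q with ht
  have ht0 : 0 ≤ t := Real.iSup_nonneg fun s => abs_nonneg _
  have hbdd : BddAbove (Set.range fun s : {s : Set (𝒜 → ℝ) // MeasurableSet s} =>
      |(P s.1).toReal - (Q s.1).toReal|) := by
    refine ⟨1, ?_⟩
    rintro x ⟨s, rfl⟩
    have h1 : (P s.1).toReal ≤ 1 := by
      have := prob_le_one (μ := P) (s := s.1)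
      simpa using ENNReal.toReal_mono ENNReal.one_ne_top this
    have h2 : (Q s.1).toReal ≤ 1 := by
      have := prob_le_one (μ := Q) (s := s.1)
      simpa using ENNReal.toReal_mono ENNReal.one_ne_top this
    rw [abs_sub_le_iff]
    constructor <;> [skip; skip] <;> linarith [ENNReal.toReal_nonneg (a := P s.1),
      ENNReal.toReal_nonneg (a := Q s.1)]
  have habs : ∀ s : Set (𝒜 → ℝ), MeasurableSet s →
      |(P s).toReal - (Q s).toReal| ≤ t := fun s hs =>
    le_ciSup hbdd (⟨s, hs⟩ : {s : Set (𝒜 → ℝ) // MeasurableSet s})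
  -- one-sided bounds between measures
  have hmeasle : ∀ (R S : Measure (𝒜 → ℝ)), IsProbabilityMeasure R → IsProbabilityMeasure S →
      (∀ s, MeasurableSet s → |(R s).toReal - (S s).toReal| ≤ t) →
      ∀ s, MeasurableSet s → R s ≤ S s + ENNReal.ofReal t := by
    intro R S hR hS hb s hs
    haveI := hR; haveI := hS
    have h1 : (R s).toReal ≤ (S s).toReal + t := by
      have := (abs_sub_le_iff.mp (hb s hs)).1; linarith
    calc R s = ENNReal.ofReal ((R s).toReal) := (ENNReal.ofReal_toReal (measure_ne_top R s)).symm
      _ ≤ ENNReal.ofReal ((S s).toReal + t) := ENNReal.ofReal_le_ofReal h1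
      _ = ENNReal.ofReal ((S s).toReal) + ENNReal.ofReal t :=
          ENNReal.ofReal_add ENNReal.toReal_nonneg ht0
      _ = S s + ENNReal.ofReal t := by rw [ENNReal.ofReal_toReal (measure_ne_top S s)]
  have hPQ : ∀ s, MeasurableSet s → P s ≤ Q s + ENNReal.ofReal t :=
    hmeasle P Q ‹_› ‹_› habs
  have hQP : ∀ s, MeasurableSet s → Q s ≤ P s + ENNReal.ofReal t :=
    hmeasle Q P ‹_› ‹_› fun s hs => by rw [abs_sub_comm]; exact habs s hs
  -- the action measures
  have key : ∀ s : Set 𝒜, MeasurableSet s →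
      |(((alg θ h) τ) s).toReal - (((alg θ' h) τ) s).toReal| ≤ (k : ℝ) * t := by
    intro s hs
    set g : (Fin k → 𝒜 → ℝ) → ℝ≥0∞ := fun x => f h x s with hgdef
    have hg : Measurable g := (Measure.measurable_coe hs).comp (hfm h)
    have hg1 : ∀ x, g x ≤ 1 := fun x => by
      haveI := hfp h x; exact prob_le_one
    have hAs : ((alg θ h) τ) s = ∫⁻ x, g x ∂(Measure.pi fun _ : Fin k => P) := by
      rw [halg θ h τ, Measure.bind_apply hs (hfm h).aemeasurable]
    have hA's : ((alg θ' h) τ) s = ∫⁻ x, g x ∂(Measure.pi fun _ : Fin k => Q) := by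
      rw [halg θ' h τ, Measure.bind_apply hs (hfm h).aemeasurable]
    have hfin : ∀ (μ : Measure (𝒜 → ℝ)), IsProbabilityMeasure μ →
        ∫⁻ x, g x ∂(Measure.pi fun _ : Fin k => μ) ≤ 1 := by
      intro μ hμ
      haveI := hμ
      calc ∫⁻ x, g x ∂(Measure.pi fun _ : Fin k => μ)
          ≤ ∫⁻ _, 1 ∂(Measure.pi fun _ : Fin k => μ) := lintegral_mono fun x => hg1 x
        _ = 1 := by simp
    have h1 := lintegral_pi_le k P Q ‹_› ‹_› (ENNReal.ofReal t) hPQ g hg hg1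
    have h2 := lintegral_pi_le k Q P ‹_› ‹_› (ENNReal.ofReal t) hQP g hg hg1
    have hkt : (k : ℝ≥0∞) * ENNReal.ofReal t = ENNReal.ofReal ((k : ℝ) * t) := by
      rw [ENNReal.ofReal_mul (by positivity), ENNReal.ofReal_natCast]
    rw [hkt] at h1 h2
    have hfinP : ∫⁻ x, g x ∂(Measure.pi fun _ : Fin k => P) ≠ ⊤ :=
      ne_top_of_le_ne_top ENNReal.one_ne_top (hfin P ‹_›)
    have hfinQ : ∫⁻ x, g x ∂(Measure.pi fun _ : Fin k => Q) ≠ ⊤ :=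
      ne_top_of_le_ne_top ENNReal.one_ne_top (hfin Q ‹_›)
    rw [hAs, hA's, abs_sub_le_iff]
    constructor
    · have := ENNReal.toReal_mono (by
        exact ENNReal.add_ne_top.mpr ⟨hfinQ, ENNReal.ofReal_ne_top⟩) h1
      rw [ENNReal.toReal_add hfinQ ENNReal.ofReal_ne_top,
        ENNReal.toReal_ofReal (by positivity)] at this
      linarith
    · have := ENNReal.toReal_mono (by
        exact ENNReal.add_ne_top.mpr ⟨hfinP, ENNReal.ofReal_ne_top⟩) h2
      rw [ENNReal.toReal_add hfinP ENNReal.ofReal_ne_top,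
        ENNReal.toReal_ofReal (by positivity)] at this
      linarith
  haveI : Nonempty {s : Set 𝒜 // MeasurableSet s} := ⟨⟨∅, MeasurableSet.empty⟩⟩
  exact ciSup_le fun s => key s.1 s.2

end
end

section
/- Decoupling lemma: let P and P' be two probability distributions over random variables (Y, X_0, X_1, …, X_k) such that (a) under both P and P', the variables X_0, X_1, …, X_k are conditionally independent and identically distributed given Y, and (b) the conditionals P(Y | X_0) and P'(Y | X_0) coincide almost surely. Then TV(P(X_0,…,X_k) ∥ P'(X_0,…,X_k)) ≤ (2k+3)·TV(P(X_0) ∥ P'(X_0)). -/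
open MeasureTheory ProbabilityTheory

noncomputable section

section TVBasic

variable {α β : Type*} [MeasurableSpace α] [MeasurableSpace β]

instance instNonemptyMeasSub : Nonempty {s : Set α // MeasurableSet s} :=
  ⟨⟨∅, MeasurableSet.empty⟩⟩

lemma toReal_prob_le_one (P : Measure α) [IsProbabilityMeasure P] (s : Set α) :
    (P s).toReal ≤ 1 := by
  have := prob_le_one (μ := P) (s := s)
  simpa using ENNReal.toReal_mono (by simp) this

lemma tv_bddAbove (P Q : Measure α) [IsProbabilityMeasure P] [IsProbabilityMeasure Q] :
    BddAbove (Set.range fun s : {s : Set α // MeasurableSet s} =>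
      |(P s.1).toReal - (Q s.1).toReal|) := by
  refine ⟨1, ?_⟩
  rintro x ⟨s, rfl⟩
  have h1 := toReal_prob_le_one P s.1
  have h2 := toReal_prob_le_one Q s.1
  have h3 : (0:ℝ) ≤ (P s.1).toReal := ENNReal.toReal_nonneg
  have h4 : (0:ℝ) ≤ (Q s.1).toReal := ENNReal.toReal_nonneg
  rw [abs_sub_le_iff]
  constructor <;> linarith

lemma le_tv (P Q : Measure α) [IsProbabilityMeasure P] [IsProbabilityMeasure Q]
    {s : Set α} (hs : MeasurableSet s) :
    |(P s).toReal - (Q s).toReal| ≤ TV P Q :=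
  le_ciSup (tv_bddAbove P Q) ⟨s, hs⟩

lemma tv_le (P Q : Measure α) {c : ℝ}
    (h : ∀ s : Set α, MeasurableSet s → |(P s).toReal - (Q s).toReal| ≤ c) :
    TV P Q ≤ c :=
  ciSup_le fun s => h s.1 s.2

lemma tv_nonneg (P Q : Measure α) [IsProbabilityMeasure P] [IsProbabilityMeasure Q] :
    0 ≤ TV P Q := by
  have := le_tv P Q MeasurableSet.empty
  simpa using this

lemma tv_comm (P Q : Measure α) : TV P Q = TV Q P := by
  unfold TV
  exact iSup_congr fun s => abs_sub_comm _ _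

lemma tv_self (P : Measure α) : TV P P = 0 := by
  have h1 : TV P P ≤ 0 := tv_le P P (fun s hs => by simp)
  have h2 : (0:ℝ) ≤ TV P P := by
    refine le_trans (by simp) (le_ciSup ?_ (⟨∅, MeasurableSet.empty⟩ : {s : Set α // MeasurableSet s}))
    refine ⟨0, ?_⟩
    rintro x ⟨s, rfl⟩
    simp
  linarith

lemma tv_triangle (P Q R : Measure α) [IsProbabilityMeasure P] [IsProbabilityMeasure Q]
    [IsProbabilityMeasure R] : TV P R ≤ TV P Q + TV Q R := by
  refine tv_le P R fun s hs => ?_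
  calc |(P s).toReal - (R s).toReal|
      ≤ |(P s).toReal - (Q s).toReal| + |(Q s).toReal - (R s).toReal| := abs_sub_le _ _ _
    _ ≤ TV P Q + TV Q R := add_le_add (le_tv P Q hs) (le_tv Q R hs)

lemma integral_sub_le_tv (P Q : Measure α) [IsProbabilityMeasure P] [IsProbabilityMeasure Q]
    {f : α → ℝ} (hf : Measurable f) (h0 : ∀ x, 0 ≤ f x) (h1 : ∀ x, f x ≤ 1) :
    ∫ x, f x ∂P - ∫ x, f x ∂Q ≤ TV P Q := by
  obtain ⟨s, hs, hsub1, hsub2⟩ := hahn_decomposition (μ := P) (ν := Q)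
  have hint : ∀ (m : Measure α) [IsFiniteMeasure m], Integrable f m := by
    intro m _
    refine (integrable_const (1:ℝ)).mono' hf.aestronglyMeasurable ?_
    exact Filter.Eventually.of_forall fun x => by
      rw [Real.norm_eq_abs, abs_of_nonneg (h0 x)]; exact h1 x
  have hQs : Q.restrict s ≤ P.restrict s := by
    refine Measure.le_iff.2 fun t ht => ?_
    rw [Measure.restrict_apply ht, Measure.restrict_apply ht]
    exact hsub1 _ (ht.inter hs) Set.inter_subset_right
  have hPc : P.restrict sᶜ ≤ Q.restrict sᶜ := by
    refine Measure.le_iff.2 fun t ht => ?_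
    rw [Measure.restrict_apply ht, Measure.restrict_apply ht]
    exact hsub2 _ (ht.inter hs.compl) Set.inter_subset_right
  set m : Measure α := P.restrict s - Q.restrict s with hm
  have hmfin : IsFiniteMeasure m := isFiniteMeasure_of_le _ Measure.sub_le
  have hsum : m + Q.restrict s = P.restrict s := Measure.sub_add_cancel_of_le hQs
  have hstep1 : ∫ x in s, f x ∂P - ∫ x in s, f x ∂Q ≤ (P s).toReal - (Q s).toReal := by
    have h1' : ∫ x in s, f x ∂P = ∫ x, f x ∂m + ∫ x in s, f x ∂Q := by
      rw [← hsum, integral_add_measure (hint m) (hint _)]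
    have h2' : ∫ x, f x ∂m ≤ (m Set.univ).toReal := by
      calc ∫ x, f x ∂m ≤ ∫ _, (1:ℝ) ∂m :=
            integral_mono (hint m) (integrable_const 1) h1
        _ = (m Set.univ).toReal := by simp [measureReal_def]
    have h3' : m Set.univ = P s - Q s := by
      rw [Measure.sub_apply MeasurableSet.univ hQs]
      simp
    have h4' : (m Set.univ).toReal = (P s).toReal - (Q s).toReal := by
      rw [h3', ENNReal.toReal_sub_of_le (hsub1 s hs subset_rfl) (measure_ne_top _ _)]
    linarith
  have hstep2 : ∫ x in sᶜ, f x ∂P ≤ ∫ x in sᶜ, f x ∂Q :=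
    integral_mono_measure hPc (Filter.Eventually.of_forall h0) (hint _)
  have hsplitP : ∫ x in s, f x ∂P + ∫ x in sᶜ, f x ∂P = ∫ x, f x ∂P :=
    integral_add_compl hs (hint P)
  have hsplitQ : ∫ x in s, f x ∂Q + ∫ x in sᶜ, f x ∂Q = ∫ x, f x ∂Q :=
    integral_add_compl hs (hint Q)
  have hfin : (P s).toReal - (Q s).toReal ≤ TV P Q :=
    (le_abs_self _).trans (le_tv P Q hs)
  linarith

lemma prob_bind (P : Measure α) [IsProbabilityMeasure P] {η : α → Measure β}
    (hη : Measurable η) (hp : ∀ x, IsProbabilityMeasure (η x)) :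
    IsProbabilityMeasure (P.bind η) := by
  constructor
  rw [Measure.bind_apply MeasurableSet.univ hη.aemeasurable]
  simp [fun x => (hp x).measure_univ]

lemma bind_apply_toReal (P : Measure α) [IsProbabilityMeasure P] {η : α → Measure β}
    (hη : Measurable η) (hp : ∀ x, IsProbabilityMeasure (η x))
    {s : Set β} (hs : MeasurableSet s) :
    ((P.bind η) s).toReal = ∫ x, (η x s).toReal ∂P := by
  rw [Measure.bind_apply hs hη.aemeasurable]
  refine (integral_toReal ((Measure.measurable_coe hs).comp hη).aemeasurable ?_).symm
  exact Filter.Eventually.of_forall fun x =>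
    lt_of_le_of_lt (prob_le_one (μ := η x)) ENNReal.one_lt_top

lemma tv_bind_le (P Q : Measure α) [IsProbabilityMeasure P] [IsProbabilityMeasure Q]
    {η : α → Measure β} (hη : Measurable η) (hp : ∀ x, IsProbabilityMeasure (η x)) :
    TV (P.bind η) (Q.bind η) ≤ TV P Q := by
  refine tv_le _ _ fun s hs => ?_
  rw [bind_apply_toReal P hη hp hs, bind_apply_toReal Q hη hp hs]
  have hfm : Measurable fun x => ((η x) s).toReal :=
    ((Measure.measurable_coe hs).comp hη).ennreal_toReal
  have h0 : ∀ x, 0 ≤ ((η x) s).toReal := fun x => ENNReal.toReal_nonneg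
  have h1 : ∀ x, ((η x) s).toReal ≤ 1 := fun x => by
    have := hp x
    have := prob_le_one (μ := η x) (s := s)
    simpa using ENNReal.toReal_mono (by simp) this
  rw [abs_sub_le_iff]
  refine ⟨integral_sub_le_tv P Q hfm h0 h1, ?_⟩
  have := integral_sub_le_tv Q P hfm h0 h1
  rw [tv_comm Q P] at this
  linarith

lemma tv_map_le (P Q : Measure α) [IsProbabilityMeasure P] [IsProbabilityMeasure Q]
    {f : α → β} (hf : Measurable f) : TV (P.map f) (Q.map f) ≤ TV P Q := by
  refine tv_le _ _ fun s hs => ?_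
  rw [Measure.map_apply hf hs, Measure.map_apply hf hs]
  exact le_tv P Q (hf hs)

lemma map_bind' {γ : Type*} [MeasurableSpace γ] {m : Measure α} {g : α → Measure β} {f : β → γ}
    (hg : Measurable g) (hf : Measurable f) :
    (m.bind g).map f = m.bind fun a => (g a).map f := by
  have hd : Measurable fun x : β => Measure.dirac (f x) := Measure.measurable_dirac.comp hf
  rw [← Measure.bind_dirac_eq_map _ hf, Measure.bind_bind hg.aemeasurable hd.aemeasurable]
  refine congrArg _ (funext fun a => ?_)
  exact Measure.bind_dirac_eq_map _ hf

lemma bind_map' {γ : Type*} [MeasurableSpace γ] {m : Measure α} {f : α → β} {g : β → Measure γ}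
    (hf : Measurable f) (hg : Measurable g) :
    (m.map f).bind g = m.bind (g ∘ f) := by
  have hd : Measurable fun x : α => Measure.dirac (f x) := Measure.measurable_dirac.comp hf
  rw [← Measure.bind_dirac_eq_map _ hf, Measure.bind_bind hd.aemeasurable hg.aemeasurable]
  refine congrArg _ (funext fun a => ?_)
  exact Measure.dirac_bind hg _
end TVBasic

set_option linter.unusedSectionVars false

open scoped Classical

section PiLemmas
variable {ι : Type*} [Fintype ι] [DecidableEq ι] {γ δ : Type*}
  [MeasurableSpace γ] [MeasurableSpace δ]

lemma update_preimage_box (i : ι) (x : δ) (t : ι → Set δ) :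
    (fun f : ι → δ => Function.update f i x) ⁻¹' Set.pi Set.univ t =
      if x ∈ t i then Set.pi Set.univ (Function.update t i Set.univ) else ∅ := by
  ext f
  by_cases hx : x ∈ t i
  · simp only [if_pos hx, Set.mem_preimage, Set.mem_pi, Set.mem_univ, true_implies]
    constructor
    · intro h j
      rcases eq_or_ne j i with rfl | hj
      · simp
      · rw [Function.update_of_ne hj]
        have := h j
        rwa [Function.update_of_ne hj] at this
    · intro h j
      rcases eq_or_ne j i with rfl | hj
      · rwa [Function.update_self]
      · rw [Function.update_of_ne hj]
        have := h j
        rwa [Function.update_of_ne hj] at this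
  · simp only [if_neg hx, Set.mem_preimage, Set.mem_pi, Set.mem_univ, true_implies,
      Set.mem_empty_iff_false, iff_false]
    intro h
    exact hx (by simpa using h i)

lemma measurable_pi_kernel (m : ι → γ → Measure δ) (hm : ∀ i, Measurable (m i))
    (hp : ∀ i y, IsProbabilityMeasure (m i y)) :
    Measurable fun y => Measure.pi fun i => m i y := by
  haveI : ∀ y, IsProbabilityMeasure (Measure.pi fun i => m i y) := fun y => by
    haveI := fun i => hp i y; infer_instance
  refine Measure.measurable_of_measurable_coe _ fun s hs => ?_
  refine MeasurableSpace.induction_on_inter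
    (C := fun s _ => Measurable fun y => (Measure.pi fun i => m i y) s)
    generateFrom_pi.symm isPiSystem_pi ?_ ?_ ?_ ?_ _ hs
  · simp only [measure_empty]; exact measurable_const
  · rintro t ⟨t, ht, rfl⟩
    simp only [Set.mem_univ_pi, Set.mem_setOf_eq] at ht
    simp_rw [Measure.pi_pi]
    exact Finset.measurable_prod _ fun i _ => (Measure.measurable_coe (ht i)).comp (hm i)
  · intro t htm ht
    have : ∀ y, (Measure.pi fun i => m i y) tᶜ = 1 - (Measure.pi fun i => m i y) t :=
      fun y => by
        rw [measure_compl htm (measure_ne_top _ _), measure_univ]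
    simp_rw [this]
    exact Measurable.sub measurable_const ht
  · intro g hdisj hgm ihg
    have : ∀ y, (Measure.pi fun i => m i y) (⋃ n, g n) =
        ∑' n, (Measure.pi fun i => m i y) (g n) := fun y => measure_iUnion hdisj hgm
    simp_rw [this]
    exact Measurable.ennreal_tsum ihg

lemma measurable_update_kernel (m : ι → γ → Measure δ) (hm : ∀ i, Measurable (m i))
    (hp : ∀ i y, IsProbabilityMeasure (m i y)) (i : ι) :
    Measurable fun p : γ × δ =>
      (Measure.pi fun j => m j p.1).map fun f => Function.update f i p.2 := by
  haveI : ∀ y, IsProbabilityMeasure (Measure.pi fun j => m j y) := fun y => by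
    haveI := fun j => hp j y; infer_instance
  refine Measure.measurable_of_measurable_coe _ fun s hs => ?_
  simp_rw [Measure.map_apply measurable_update_left hs]
  refine MeasurableSpace.induction_on_inter
    (C := fun s _ => Measurable fun p : γ × δ =>
      (Measure.pi fun j => m j p.1) ((fun f => Function.update f i p.2) ⁻¹' s))
    generateFrom_pi.symm isPiSystem_pi ?_ ?_ ?_ ?_ _ hs
  · simp only [Set.preimage_empty, measure_empty]; exact measurable_const
  · rintro t ⟨t, ht, rfl⟩
    simp only [Set.mem_univ_pi, Set.mem_setOf_eq] at ht
    have key : ∀ p : γ × δ,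
        (Measure.pi fun j => m j p.1)
            ((fun f => Function.update f i p.2) ⁻¹' Set.pi Set.univ t) =
          if p.2 ∈ t i then
            (Measure.pi fun j => m j p.1) (Set.pi Set.univ (Function.update t i Set.univ))
          else 0 := by
      intro p
      rw [update_preimage_box]
      split_ifs with h
      · rfl
      · exact measure_empty
    simp_rw [key]
    refine Measurable.ite (measurable_snd (ht i)) ?_ measurable_const
    exact ((Measure.measurable_coe
        (MeasurableSet.univ_pi fun j => by
          rcases eq_or_ne j i with rfl | hj
          · simp only [Function.update_self]; exact MeasurableSet.univ
          · simp only [Function.update_of_ne hj]; exact ht j)).comp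
      (measurable_pi_kernel m hm hp)).comp measurable_fst
  · intro t htm ht
    have : ∀ p : γ × δ,
        (Measure.pi fun j => m j p.1) ((fun f => Function.update f i p.2) ⁻¹' tᶜ) =
          1 - (Measure.pi fun j => m j p.1) ((fun f => Function.update f i p.2) ⁻¹' t) := by
      intro p
      rw [Set.preimage_compl, measure_compl (measurable_update_left htm)
        (measure_ne_top _ _), measure_univ]
    simp_rw [this]
    exact Measurable.sub measurable_const ht
  · intro g hdisj hgm ihg
    have : ∀ p : γ × δ,
        (Measure.pi fun j => m j p.1) ((fun f => Function.update f i p.2) ⁻¹' ⋃ n, g n) =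
          ∑' n, (Measure.pi fun j => m j p.1) ((fun f => Function.update f i p.2) ⁻¹' g n) := by
      intro p
      rw [Set.preimage_iUnion]
      exact measure_iUnion (fun a b hab => (hdisj hab).preimage _)
        fun n => measurable_update_left (hgm n)
    simp_rw [this]
    exact Measurable.ennreal_tsum ihg

lemma pi_map_eval (m : ι → Measure δ) [∀ i, IsProbabilityMeasure (m i)] (i : ι) :
    (Measure.pi m).map (fun f => f i) = m i := by
  ext s hs
  rw [Measure.map_apply (measurable_pi_apply i) hs]
  have hpre : (fun f : ι → δ => f i) ⁻¹' s =
      Set.pi Set.univ (Function.update (fun _ : ι => (Set.univ : Set δ)) i s) := by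
    ext f
    simp only [Set.mem_preimage, Set.mem_pi, Set.mem_univ, true_implies, Function.eval]
    constructor
    · intro h j
      rcases eq_or_ne j i with rfl | hj
      · simpa using h
      · simp [Function.update_of_ne hj]
    · intro h
      have := h i
      simpa using this
  rw [hpre, Measure.pi_pi]
  rw [Finset.prod_eq_single i (fun j _ hj => by
    simp [Function.update_of_ne hj]) (fun h => absurd (Finset.mem_univ i) h)]
  simp

lemma bind_update_pi (m : ι → Measure δ) [∀ i, IsProbabilityMeasure (m i)]
    (ν₀ : Measure δ) [IsProbabilityMeasure ν₀] (i : ι) :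
    (ν₀.bind fun x => (Measure.pi m).map fun f => Function.update f i x) =
      Measure.pi (Function.update m i ν₀) := by
  haveI : ∀ j, IsProbabilityMeasure (Function.update m i ν₀ j) := fun j => by
    rcases eq_or_ne j i with rfl | hj
    · simpa using (inferInstance : IsProbabilityMeasure ν₀)
    · simpa [Function.update_of_ne hj] using (inferInstance : IsProbabilityMeasure (m j))
  refine (Measure.pi_eq fun s hs => ?_).symm
  have hmeas : Measurable fun x : δ => (Measure.pi m).map fun f => Function.update f i x := by
    have := (measurable_update_kernel (γ := Unit) (fun j _ => m j)
      (fun j => measurable_const) (fun j _ => inferInstance) i).comp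
      (measurable_prodMk_left (x := ()))
    exact this
  rw [Measure.bind_apply (MeasurableSet.univ_pi hs) hmeas.aemeasurable]
  have hcalc : ∀ x : δ,
      ((Measure.pi m).map fun f => Function.update f i x) (Set.pi Set.univ s) =
        Set.indicator (s i)
          (fun _ => Measure.pi m
            (Set.pi Set.univ (Function.update s i Set.univ))) x := by
    intro x
    rw [Measure.map_apply measurable_update_left (MeasurableSet.univ_pi hs),
      update_preimage_box, Set.indicator_apply]
    split_ifs with h
    · rfl
    · exact measure_empty
  simp_rw [hcalc]
  rw [lintegral_indicator (hs i), setLIntegral_const, Measure.pi_pi]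
  have hL : (∏ j, m j (Function.update s i Set.univ j)) = ∏ j ∈ Finset.univ.erase i, m j (s j) := by
    rw [← Finset.mul_prod_erase Finset.univ _ (Finset.mem_univ i)]
    rw [Function.update_self, measure_univ, one_mul]
    exact Finset.prod_congr rfl fun j hj =>
      by rw [Function.update_of_ne (Finset.ne_of_mem_erase hj)]
  have hR : (∏ j, Function.update m i ν₀ j (s j)) =
      ν₀ (s i) * ∏ j ∈ Finset.univ.erase i, m j (s j) := by
    rw [← Finset.mul_prod_erase Finset.univ _ (Finset.mem_univ i), Function.update_self]
    congr 1
    exact Finset.prod_congr rfl fun j hj =>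
      by rw [Function.update_of_ne (Finset.ne_of_mem_erase hj)]
  rw [hL, hR, mul_comm]
end PiLemmas

section Helpers
variable {α β : Type*} [MeasurableSpace α] [MeasurableSpace β]

lemma measurable_map_prod_mk' (η : α → Measure β) (hη : Measurable η)
    (hp : ∀ a, IsProbabilityMeasure (η a)) :
    Measurable fun y => (η y).map (Prod.mk y) := by
  let K : Kernel α β := ⟨η, hη⟩
  haveI : IsMarkovKernel K := ⟨fun a => hp a⟩
  have : Measurable fun y => (K y).map (Prod.mk y) :=
    Measure.measurable_of_measurable_coe _ fun s hs => by
      simp_rw [Measure.map_apply measurable_prodMk_left hs]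
      exact Kernel.measurable_kernel_prodMk_left hs
  exact this

lemma bind_joint_map_snd (ν : Measure α) (Pi : α → Measure β) (hPi : Measurable Pi)
    (hp : ∀ a, IsProbabilityMeasure (Pi a)) :
    (ν.bind fun y => (Pi y).map (Prod.mk y)).map Prod.snd = ν.bind Pi := by
  rw [map_bind' (measurable_map_prod_mk' Pi hPi hp) measurable_snd]
  refine congrArg _ (funext fun y => ?_)
  rw [Measure.map_map measurable_snd measurable_prodMk_left]
  have h : (Prod.snd ∘ Prod.mk y : β → β) = id := rfl
  rw [h, Measure.map_id]

variable {ι : Type*} [Fintype ι] [DecidableEq ι] {δ : Type*} [MeasurableSpace δ]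

lemma bind_joint_map_eval (ν : Measure α) (m : ι → α → Measure δ)
    (hm : ∀ i, Measurable (m i)) (hp : ∀ i y, IsProbabilityMeasure (m i y)) (i : ι) :
    ((ν.bind fun y => (Measure.pi fun j => m j y).map (Prod.mk y)).map
        fun p : α × (ι → δ) => (p.1, p.2 i)) =
      ν.bind fun y => (m i y).map (Prod.mk y) := by
  have hpp : ∀ y, IsProbabilityMeasure (Measure.pi fun j => m j y) := fun y => by
    haveI := fun j => hp j y; infer_instance
  have hg : Measurable fun p : α × (ι → δ) => (p.1, p.2 i) :=
    measurable_fst.prodMk ((measurable_pi_apply i).comp measurable_snd)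
  rw [map_bind' (measurable_map_prod_mk' _ (measurable_pi_kernel m hm hp) hpp) hg]
  refine congrArg _ (funext fun y => ?_)
  haveI := fun j => hp j y
  rw [Measure.map_map hg measurable_prodMk_left]
  refine Eq.trans ?_ (congrArg (Measure.map (Prod.mk y)) (pi_map_eval (fun j => m j y) i))
  exact (Measure.map_map measurable_prodMk_left (measurable_pi_apply i)).symm

lemma bind_joint_bind_update (ν : Measure α) (m : ι → α → Measure δ)
    (hm : ∀ i, Measurable (m i)) (hp : ∀ i y, IsProbabilityMeasure (m i y))
    (r : α → Measure δ) (hr : Measurable r) (hrp : ∀ a, IsProbabilityMeasure (r a)) (i : ι) :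
    ((ν.bind fun y => (r y).map (Prod.mk y)).bind
        fun p : α × δ => (Measure.pi fun j => m j p.1).map fun f => Function.update f i p.2) =
      ν.bind fun y => Measure.pi (Function.update (fun j => m j y) i (r y)) := by
  rw [Measure.bind_bind (measurable_map_prod_mk' r hr hrp).aemeasurable (measurable_update_kernel m hm hp i).aemeasurable]
  refine congrArg _ (funext fun y => ?_)
  rw [bind_map' measurable_prodMk_left (measurable_update_kernel m hm hp i)]
  haveI := fun j => hp j y
  haveI := hrp y
  exact bind_update_pi (fun j => m j y) (r y) i

lemma tv_chain (F : ℕ → Measure β) (hF : ∀ i, IsProbabilityMeasure (F i)) :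
    ∀ n, TV (F 0) (F n) ≤ ∑ i ∈ Finset.range n, TV (F i) (F (i + 1)) := by
  intro n
  induction n with
  | zero => simp [tv_self]
  | succ n ih =>
    haveI := hF 0; haveI := hF n; haveI := hF (n + 1)
    rw [Finset.sum_range_succ]
    have := tv_triangle (F 0) (F n) (F (n + 1))
    linarith

end Helpers

/-- The joint law of `(a, b)` where `a ∼ ν` and `b ∼ κ a`.  Saying that
`P.map Prod.swap = withKernel (P.map Prod.snd) κ` expresses that `κ` is a regular conditional
distribution (disintegration) of the first coordinate given the second under `P`. -/
def withKernel {α β : Type*} [MeasurableSpace α] [MeasurableSpace β]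
    (ν : Measure α) (κ : Kernel α β) : Measure (α × β) :=
  ν.bind fun a => (κ a).map fun b => (a, b)

theorem stmt15 {γ δ : Type*} [MeasurableSpace γ] [MeasurableSpace δ] (k : ℕ)
    (P P' : Measure (γ × (Fin (k + 1) → δ)))
    [IsProbabilityMeasure P] [IsProbabilityMeasure P']
    (ρ ρ' : Kernel γ δ) (hρ : IsMarkovKernel ρ) (hρ' : IsMarkovKernel ρ')
    (hPiid : P = (P.map Prod.fst).bind fun y =>
      (Measure.pi fun _ : Fin (k + 1) => ρ y).map fun xs => (y, xs))
    (hP'iid : P' = (P'.map Prod.fst).bind fun y =>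
      (Measure.pi fun _ : Fin (k + 1) => ρ' y).map fun xs => (y, xs))
    (κ : Kernel δ γ) (hκ : IsMarkovKernel κ)
    (hcond : P.map (fun p => (p.2 0, p.1)) = withKernel (P.map fun p => p.2 0) κ)
    (hcond' : P'.map (fun p => (p.2 0, p.1)) = withKernel (P'.map fun p => p.2 0) κ) :
    TV (P.map Prod.snd) (P'.map Prod.snd) ≤
      (2 * (k : ℝ) + 3) * TV (P.map fun p => p.2 0) (P'.map fun p => p.2 0) := by
  haveI := hρ; haveI := hρ'; haveI := hκ
  set ν : Measure γ := P.map Prod.fst with hν_def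
  set ν' : Measure γ := P'.map Prod.fst with hν'_def
  set μ : Measure δ := P.map (fun p => p.2 0) with hμ_def
  set μ' : Measure δ := P'.map (fun p => p.2 0) with hμ'_def
  have hmeas0 : Measurable fun p : γ × (Fin (k + 1) → δ) => p.2 0 :=
    (measurable_pi_apply 0).comp measurable_snd
  have hmeasf : Measurable fun p : γ × (Fin (k + 1) → δ) => (p.2 0, p.1) :=
    hmeas0.prodMk measurable_fst
  haveI : IsProbabilityMeasure ν := Measure.isProbabilityMeasure_map measurable_fst.aemeasurable
  haveI : IsProbabilityMeasure ν' := Measure.isProbabilityMeasure_map measurable_fst.aemeasurable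
  haveI : IsProbabilityMeasure μ := Measure.isProbabilityMeasure_map hmeas0.aemeasurable
  haveI : IsProbabilityMeasure μ' := Measure.isProbabilityMeasure_map hmeas0.aemeasurable
  have hρm : Measurable ⇑ρ := ρ.measurable
  have hρ'm : Measurable ⇑ρ' := ρ'.measurable
  have hκm : Measurable ⇑κ := κ.measurable
  have hρp : ∀ y, IsProbabilityMeasure (ρ y) := fun y => inferInstance
  have hρ'p : ∀ y, IsProbabilityMeasure (ρ' y) := fun y => inferInstance
  have hκp : ∀ x, IsProbabilityMeasure (κ x) := fun x => inferInstance
  -- hybrid kernels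
  set Gm : ℕ → Fin (k + 1) → γ → Measure δ :=
    (fun i j => if (j : ℕ) < i then ⇑ρ' else ⇑ρ) with hGm_def
  have hGm_meas : ∀ i j, Measurable (Gm i j) := by
    intro i j; rw [hGm_def]; dsimp only; split_ifs
    exacts [hρ'm, hρm]
  have hGm_prob : ∀ i j y, IsProbabilityMeasure (Gm i j y) := by
    intro i j y; rw [hGm_def]; dsimp only; split_ifs
    exacts [hρ'p y, hρp y]
  set G : ℕ → Measure (Fin (k + 1) → δ) :=
    (fun i => ν'.bind fun y => Measure.pi fun j => Gm i j y) with hG_def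
  have hGbind_meas : ∀ i, Measurable fun y => Measure.pi fun j : Fin (k + 1) => Gm i j y :=
    fun i => measurable_pi_kernel _ (hGm_meas i) (fun j y => hGm_prob i j y)
  have hGprob : ∀ i, IsProbabilityMeasure (G i) := by
    intro i; rw [hG_def]
    exact prob_bind _ (hGbind_meas i)
      (fun y => by haveI := fun j => hGm_prob i j y; infer_instance)
  -- joint kernel measurabilities
  have hjρm : Measurable fun y => (ρ y).map (Prod.mk y) := measurable_map_prod_mk' _ hρm hρp
  have hjρ'm : Measurable fun y => (ρ' y).map (Prod.mk y) := measurable_map_prod_mk' _ hρ'm hρ'p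
  have hjρp : ∀ y, IsProbabilityMeasure ((ρ y).map (Prod.mk y)) := fun y => by
    haveI := hρp y; exact Measure.isProbabilityMeasure_map measurable_prodMk_left.aemeasurable
  have hjρ'p : ∀ y, IsProbabilityMeasure ((ρ' y).map (Prod.mk y)) := fun y => by
    haveI := hρ'p y; exact Measure.isProbabilityMeasure_map measurable_prodMk_left.aemeasurable
  have hjκm : Measurable fun x => (κ x).map (Prod.mk x) := measurable_map_prod_mk' _ hκm hκp
  have hjκp : ∀ x, IsProbabilityMeasure ((κ x).map (Prod.mk x)) := fun x => by
    haveI := hκp x; exact Measure.isProbabilityMeasure_map measurable_prodMk_left.aemeasurable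
  haveI : IsProbabilityMeasure (ν.bind fun y => (ρ y).map (Prod.mk y)) := prob_bind _ hjρm hjρp
  haveI : IsProbabilityMeasure (ν'.bind fun y => (ρ y).map (Prod.mk y)) := prob_bind _ hjρm hjρp
  haveI : IsProbabilityMeasure (ν'.bind fun y => (ρ' y).map (Prod.mk y)) :=
    prob_bind _ hjρ'm hjρ'p
  haveI : IsProbabilityMeasure (withKernel μ κ) := prob_bind _ hjκm hjκp
  haveI : IsProbabilityMeasure (withKernel μ' κ) := prob_bind _ hjκm hjκp
  -- basic identities
  have hνeq : ν = μ.bind ⇑κ := by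
    have h := congrArg (fun m : Measure (δ × γ) => m.map Prod.snd) hcond
    rw [Measure.map_map measurable_snd hmeasf] at h
    rw [show (Prod.snd ∘ fun p : γ × (Fin (k + 1) → δ) => (p.2 0, p.1)) = Prod.fst
      from rfl] at h
    exact h.trans (bind_joint_map_snd μ ⇑κ hκm hκp)
  have hν'eq : ν' = μ'.bind ⇑κ := by
    have h := congrArg (fun m : Measure (δ × γ) => m.map Prod.snd) hcond'
    rw [Measure.map_map measurable_snd hmeasf] at h
    rw [show (Prod.snd ∘ fun p : γ × (Fin (k + 1) → δ) => (p.2 0, p.1)) = Prod.fst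
      from rfl] at h
    exact h.trans (bind_joint_map_snd μ' ⇑κ hκm hκp)
  have keyν : TV ν ν' ≤ TV μ μ' := by
    rw [hνeq, hν'eq]; exact tv_bind_le μ μ' hκm hκp
  have e1 : P.map (fun p : γ × (Fin (k + 1) → δ) => (p.1, p.2 0)) =
      ν.bind fun y => (ρ y).map (Prod.mk y) := by
    conv_lhs => rw [hPiid]
    exact bind_joint_map_eval ν (fun _ : Fin (k + 1) => ⇑ρ) (fun _ => hρm) (fun _ y => hρp y) 0
  have e1' : P'.map (fun p : γ × (Fin (k + 1) → δ) => (p.1, p.2 0)) =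
      ν'.bind fun y => (ρ' y).map (Prod.mk y) := by
    conv_lhs => rw [hP'iid]
    exact bind_joint_map_eval ν' (fun _ : Fin (k + 1) => ⇑ρ') (fun _ => hρ'm)
      (fun _ y => hρ'p y) 0
  have e2 : P.map (fun p : γ × (Fin (k + 1) → δ) => (p.1, p.2 0)) =
      (withKernel μ κ).map Prod.swap := by
    rw [← hcond, Measure.map_map measurable_swap hmeasf]
    rfl
  have e2' : P'.map (fun p : γ × (Fin (k + 1) → δ) => (p.1, p.2 0)) =
      (withKernel μ' κ).map Prod.swap := by
    rw [← hcond', Measure.map_map measurable_swap hmeasf]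
    rfl
  have keyJ : TV (ν.bind fun y => (ρ y).map (Prod.mk y))
      (ν'.bind fun y => (ρ' y).map (Prod.mk y)) ≤ TV μ μ' := by
    rw [← e1, ← e1', e2, e2']
    calc TV ((withKernel μ κ).map Prod.swap) ((withKernel μ' κ).map Prod.swap)
        ≤ TV (withKernel μ κ) (withKernel μ' κ) := tv_map_le _ _ measurable_swap
      _ ≤ TV μ μ' := tv_bind_le μ μ' hjκm hjκp
  have t1 : TV (ν'.bind fun y => (ρ y).map (Prod.mk y))
      (ν.bind fun y => (ρ y).map (Prod.mk y)) ≤ TV ν' ν := tv_bind_le ν' ν hjρm hjρp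
  have t3 := tv_triangle (ν'.bind fun y => (ρ y).map (Prod.mk y))
    (ν.bind fun y => (ρ y).map (Prod.mk y)) (ν'.bind fun y => (ρ' y).map (Prod.mk y))
  have t4 : TV ν' ν = TV ν ν' := tv_comm _ _
  have keyD : TV (ν'.bind fun y => (ρ y).map (Prod.mk y))
      (ν'.bind fun y => (ρ' y).map (Prod.mk y)) ≤ 2 * TV μ μ' := by linarith
  -- hybrid steps
  have step : ∀ i : ℕ, i ≤ k → TV (G i) (G (i + 1)) ≤ 2 * TV μ μ' := by
    intro i hi
    set fi : Fin (k + 1) := ⟨i, Nat.lt_succ_of_le hi⟩ with hfi_def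
    have hfival : (fi : ℕ) = i := rfl
    have hA : ((ν'.bind fun y => (ρ y).map (Prod.mk y)).bind fun p : γ × δ =>
        (Measure.pi fun j => Gm i j p.1).map fun f => Function.update f fi p.2) = G i := by
      rw [bind_joint_bind_update ν' (Gm i) (hGm_meas i) (fun j y => hGm_prob i j y)
        ⇑ρ hρm hρp fi, hG_def]
      refine congrArg _ (funext fun y => ?_)
      refine congrArg Measure.pi (funext fun j => ?_)
      rw [Function.update_apply]
      by_cases hj : j = fi
      · subst hj
        rw [if_pos rfl, hGm_def]
        dsimp only
        rw [if_neg (by omega)]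
      · rw [if_neg hj]
    have hB : ((ν'.bind fun y => (ρ' y).map (Prod.mk y)).bind fun p : γ × δ =>
        (Measure.pi fun j => Gm i j p.1).map fun f => Function.update f fi p.2) = G (i + 1) := by
      rw [bind_joint_bind_update ν' (Gm i) (hGm_meas i) (fun j y => hGm_prob i j y)
        ⇑ρ' hρ'm hρ'p fi, hG_def]
      refine congrArg _ (funext fun y => ?_)
      refine congrArg Measure.pi (funext fun j => ?_)
      rw [Function.update_apply]
      by_cases hj : j = fi
      · subst hj
        rw [if_pos rfl, hGm_def]
        dsimp only
        rw [if_pos (by omega)]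
      · have hjv : (j : ℕ) ≠ i := fun h => hj (Fin.ext (by rw [h, hfival]))
        rw [if_neg hj, hGm_def]
        dsimp only
        by_cases h2 : (j : ℕ) < i
        · rw [if_pos h2, if_pos (by omega)]
        · rw [if_neg h2, if_neg (by omega)]
    have hΦm := measurable_update_kernel (Gm i) (hGm_meas i) (fun j y => hGm_prob i j y) fi
    have hΦp : ∀ p : γ × δ, IsProbabilityMeasure
        ((Measure.pi fun j => Gm i j p.1).map fun f => Function.update f fi p.2) := fun p => by
      haveI := fun j => hGm_prob i j p.1
      exact Measure.isProbabilityMeasure_map measurable_update_left.aemeasurable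
    calc TV (G i) (G (i + 1))
        = TV ((ν'.bind fun y => (ρ y).map (Prod.mk y)).bind fun p : γ × δ =>
              (Measure.pi fun j => Gm i j p.1).map fun f => Function.update f fi p.2)
            ((ν'.bind fun y => (ρ' y).map (Prod.mk y)).bind fun p : γ × δ =>
              (Measure.pi fun j => Gm i j p.1).map fun f => Function.update f fi p.2) := by
          rw [hA, hB]
      _ ≤ TV (ν'.bind fun y => (ρ y).map (Prod.mk y))
            (ν'.bind fun y => (ρ' y).map (Prod.mk y)) := tv_bind_le _ _ hΦm hΦp
      _ ≤ 2 * TV μ μ' := keyD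
  -- chain
  have hchain := tv_chain G hGprob (k + 1)
  have hsum : ∑ i ∈ Finset.range (k + 1), TV (G i) (G (i + 1)) ≤
      ((k : ℝ) + 1) * (2 * TV μ μ') := by
    have h := Finset.sum_le_card_nsmul (Finset.range (k + 1))
      (fun i => TV (G i) (G (i + 1))) (2 * TV μ μ')
      (fun i hi => step i (Nat.lt_succ_iff.mp (Finset.mem_range.mp hi)))
    rw [Finset.card_range, nsmul_eq_mul] at h
    push_cast at h ⊢
    linarith
  -- endpoints
  have hG0 : G 0 = ν'.bind fun y => Measure.pi fun _ : Fin (k + 1) => ρ y := by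
    rw [hG_def]
    refine congrArg _ (funext fun y => ?_)
    refine congrArg Measure.pi (funext fun j => ?_)
    rw [hGm_def]
    dsimp only
    rw [if_neg (by omega)]
  have hGk : G (k + 1) = ν'.bind fun y => Measure.pi fun _ : Fin (k + 1) => ρ' y := by
    rw [hG_def]
    refine congrArg _ (funext fun y => ?_)
    refine congrArg Measure.pi (funext fun j => ?_)
    rw [hGm_def]
    dsimp only
    rw [if_pos (j.isLt)]
  have hPim : Measurable fun y => Measure.pi fun _ : Fin (k + 1) => ρ y :=
    measurable_pi_kernel (fun _ => ⇑ρ) (fun _ => hρm) (fun _ y => hρp y)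
  have hPi'm : Measurable fun y => Measure.pi fun _ : Fin (k + 1) => ρ' y :=
    measurable_pi_kernel (fun _ => ⇑ρ') (fun _ => hρ'm) (fun _ y => hρ'p y)
  have hPip : ∀ y, IsProbabilityMeasure (Measure.pi fun _ : Fin (k + 1) => ρ y) := fun y => by
    haveI := hρp y; infer_instance
  have hPi'p : ∀ y, IsProbabilityMeasure (Measure.pi fun _ : Fin (k + 1) => ρ' y) := fun y => by
    haveI := hρ'p y; infer_instance
  have hPsnd : P.map Prod.snd = ν.bind fun y => Measure.pi fun _ : Fin (k + 1) => ρ y := by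
    conv_lhs => rw [hPiid]
    exact bind_joint_map_snd ν _ hPim hPip
  have hP'snd : P'.map Prod.snd = ν'.bind fun y => Measure.pi fun _ : Fin (k + 1) => ρ' y := by
    conv_lhs => rw [hP'iid]
    exact bind_joint_map_snd ν' _ hPi'm hPi'p
  haveI : IsProbabilityMeasure (ν.bind fun y => Measure.pi fun _ : Fin (k + 1) => ρ y) :=
    prob_bind _ hPim hPip
  haveI : IsProbabilityMeasure (ν'.bind fun y => Measure.pi fun _ : Fin (k + 1) => ρ y) :=
    prob_bind _ hPim hPip
  haveI : IsProbabilityMeasure (ν'.bind fun y => Measure.pi fun _ : Fin (k + 1) => ρ' y) :=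
    prob_bind _ hPi'm hPi'p
  rw [hPsnd, hP'snd]
  have htri := tv_triangle (ν.bind fun y => Measure.pi fun _ : Fin (k + 1) => ρ y)
    (ν'.bind fun y => Measure.pi fun _ : Fin (k + 1) => ρ y)
    (ν'.bind fun y => Measure.pi fun _ : Fin (k + 1) => ρ' y)
  have h1 : TV (ν.bind fun y => Measure.pi fun _ : Fin (k + 1) => ρ y)
      (ν'.bind fun y => Measure.pi fun _ : Fin (k + 1) => ρ y) ≤ TV ν ν' :=
    tv_bind_le ν ν' hPim hPip
  have h2 : TV (ν'.bind fun y => Measure.pi fun _ : Fin (k + 1) => ρ y)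
      (ν'.bind fun y => Measure.pi fun _ : Fin (k + 1) => ρ' y) ≤
      ((k : ℝ) + 1) * (2 * TV μ μ') := by
    rw [← hG0, ← hGk]
    exact hchain.trans hsum
  nlinarith [htri, h1, h2, keyν]
end
end

section
/- Tail expectation bound for sub-Gaussian priors: suppose the action set 𝒜 is finite and the prior P_θ (a distribution over mean vectors μ ∈ ℝ^𝒜) is coordinate-wise σ²-sub-Gaussian. Then for all p ∈ (0,1], Ψ_θ(p) ≤ diam(E_θ[μ]) + σ·(8 + 5·√(log(2|𝒜|/p))). -/
open MeasureTheory ProbabilityTheory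

noncomputable section

set_option maxHeartbeats 1000000

/-- The upper tail expectation of a random variable `X`:
`Ψ_X(p) = (1/p) sup { E[XY] : Y measurable, 0 ≤ Y ≤ 1, E[Y] ≤ p }` for `p ≤ 1`,
extended by `Ψ_X(p) = E[X]` for `p > 1`. -/
def tailExp {Ω : Type*} [MeasurableSpace Ω] (μ : Measure Ω) (X : Ω → ℝ) (p : ℝ) : ℝ :=
  if p ≤ 1 then
    (1 / p) *
      ⨆ Y : {Y : Ω → ℝ // Measurable Y ∧ (∀ ω, Y ω ∈ Set.Icc (0:ℝ) 1) ∧ ∫ ω, Y ω ∂μ ≤ p},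
        ∫ ω, X ω * Y.1 ω ∂μ
  else ∫ ω, X ω ∂μ

/-- The diameter of a mean vector: `sup_a μ_a - inf_a μ_a`. -/
def mdiam {𝒜 : Type*} (m : 𝒜 → ℝ) : ℝ := (⨆ a, m a) - ⨅ a, m a

theorem stmt18 {𝒜 : Type*} [Fintype 𝒜] [Nonempty 𝒜]
    (P : Measure (𝒜 → ℝ)) [IsProbabilityMeasure P]
    (σ : ℝ) (hσ : 0 < σ)
    (hsg : ∀ a (t : ℝ), 0 ≤ t →
      P {m | t ≤ |m a - ∫ m', m' a ∂P|} ≤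
        ENNReal.ofReal (2 * Real.exp (-(t ^ 2) / (2 * σ ^ 2)))) :
    ∀ p : ℝ, 0 < p → p ≤ 1 →
      tailExp P mdiam p ≤
        mdiam (fun a => ∫ m, m a ∂P) +
          σ * (8 + 5 * Real.sqrt (Real.log (2 * (Fintype.card 𝒜 : ℝ) / p))) := by
  intro p hp hp1
  classical
  set K : ℝ := (Fintype.card 𝒜 : ℝ) with hKdef
  have hKpos : (0:ℝ) < K := by
    rw [hKdef]
    exact_mod_cast Fintype.card_pos (α := 𝒜)
  have hK1 : (1:ℝ) ≤ K := by
    rw [hKdef]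
    exact_mod_cast Fintype.card_pos (α := 𝒜)
  set c : 𝒜 → ℝ := fun a => ∫ m', m' a ∂P with hc
  set D : ℝ := mdiam c with hD
  set L : ℝ := Real.log (2 * K / p) with hL
  have h2Kp_pos : (0:ℝ) < 2 * K / p := by positivity
  have h2Kp : (2:ℝ) ≤ 2 * K / p := by
    rw [le_div_iff₀ hp]
    nlinarith
  have hL2 : Real.log 2 ≤ L := by
    rw [hL]
    exact Real.log_le_log (by norm_num) h2Kp
  have hLpos : 0 < L := lt_of_lt_of_le (Real.log_pos one_lt_two) hL2
  set r : ℝ := Real.sqrt (2 * L) with hr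
  have hrpos : 0 < r := Real.sqrt_pos.2 (by linarith)
  have hr2 : r ^ 2 = 2 * L := Real.sq_sqrt (by linarith)
  have hrlog2 : Real.log 2 ≤ r := by
    have hlog2pos : 0 < Real.log 2 := Real.log_pos one_lt_two
    have hlog2le1 : Real.log 2 ≤ 1 := by
      have : Real.log 2 ≤ Real.log (Real.exp 1) := Real.log_le_log (by norm_num)
        (by nlinarith [Real.exp_one_gt_d9])
      simpa using this
    nlinarith [Real.sq_sqrt (show (0:ℝ) ≤ 2 * L by linarith), Real.sqrt_nonneg (2*L)]
  set u : ℝ := σ * r with hu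
  have hupos : 0 < u := mul_pos hσ hrpos
  -- boundedness of ranges
  have hbdd : ∀ f : 𝒜 → ℝ, BddAbove (Set.range f) := fun f => (Set.finite_range f).bddAbove
  have hbddb : ∀ f : 𝒜 → ℝ, BddBelow (Set.range f) := fun f => (Set.finite_range f).bddBelow
  -- the max deviation
  set M : (𝒜 → ℝ) → ℝ := fun m => ⨆ a, |m a - c a| with hM
  have hMmeas : Measurable M :=
    Measurable.iSup fun a => ((measurable_pi_apply a).sub measurable_const).abs
  have hMabs : ∀ m a, |m a - c a| ≤ M m := fun m a =>
    le_ciSup (f := fun b => |m b - c b|) (hbdd _) a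
  have hMnonneg : ∀ m, 0 ≤ M m := fun m =>
    le_trans (abs_nonneg _) (hMabs m (Classical.arbitrary 𝒜))
  have hDnn : 0 ≤ D := by
    have a := Classical.arbitrary 𝒜
    have h1 := ciInf_le (hbddb c) a
    have h2 := le_ciSup (hbdd c) a
    rw [hD, mdiam]
    linarith
  -- pointwise diameter bound
  have hdiam : ∀ m, mdiam m ≤ D + 2 * M m := by
    intro m
    have h1 : (⨆ a, m a) ≤ (⨆ a, c a) + M m := by
      apply ciSup_le
      intro a
      have h := le_abs_self (m a - c a)
      have h2 := hMabs m a
      have h3 := le_ciSup (hbdd c) a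
      linarith
    have h2 : (⨅ a, c a) - M m ≤ ⨅ a, m a := by
      apply le_ciInf
      intro a
      have h := neg_abs_le (m a - c a)
      have h2 := hMabs m a
      have h3 := ciInf_le (hbddb c) a
      linarith
    rw [hD, mdiam, mdiam]
    linarith
  -- sets
  set S : ℕ → Set (𝒜 → ℝ) := fun n => {m | u + n * σ ≤ M m} with hS
  have hSmeas : ∀ n, MeasurableSet (S n) := fun n =>
    measurableSet_le measurable_const hMmeas
  have hexpL : Real.exp (-L) = p / (2 * K) := by
    rw [Real.exp_neg, Real.exp_log h2Kp_pos]
    field_simp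
  -- tail bound on S n
  have hStail : ∀ n : ℕ, P (S n) ≤ ENNReal.ofReal (p * Real.exp (-r) ^ n) := by
    intro n
    have htn : (0:ℝ) ≤ u + n * σ := by positivity
    have hsub : S n ⊆ ⋃ a, {m | u + n * σ ≤ |m a - c a|} := by
      intro m hm
      obtain ⟨a, ha⟩ := Finite.exists_max (fun a => |m a - c a|)
      have hMle : M m ≤ |m a - c a| := ciSup_le ha
      exact Set.mem_iUnion.2 ⟨a, le_trans hm hMle⟩
    have hreal : K * (2 * Real.exp (-((u + n * σ) ^ 2) / (2 * σ ^ 2)))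
        ≤ p * Real.exp (-r) ^ n := by
      have hexp1 : Real.exp (-((u + n * σ) ^ 2) / (2 * σ ^ 2))
          ≤ Real.exp (-L) * Real.exp (-r) ^ n := by
        rw [← Real.exp_nat_mul, ← Real.exp_add]
        apply Real.exp_le_exp.2
        have hσ2 : (0:ℝ) < σ ^ 2 := by positivity
        rw [div_le_iff₀ (by positivity : (0:ℝ) < 2 * σ ^ 2)]
        have : (u + n * σ) ^ 2 = σ ^ 2 * (r + n) ^ 2 := by rw [hu]; ring
        rw [this]
        nlinarith [sq_nonneg ((n:ℝ)), hr2, (Nat.cast_nonneg n : (0:ℝ) ≤ (n:ℝ)), hrpos.le]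
      calc K * (2 * Real.exp (-((u + n * σ) ^ 2) / (2 * σ ^ 2)))
          ≤ K * (2 * (Real.exp (-L) * Real.exp (-r) ^ n)) := by
            have : (0:ℝ) ≤ K * 2 := by linarith
            nlinarith [hexp1, Real.exp_pos (-L), pow_pos (Real.exp_pos (-r)) n]
        _ = p * Real.exp (-r) ^ n := by
            rw [hexpL]; field_simp
    calc P (S n) ≤ P (⋃ a, {m | u + n * σ ≤ |m a - c a|}) := measure_mono hsub
      _ ≤ ∑' a, P {m | u + n * σ ≤ |m a - c a|} := measure_iUnion_le _
      _ = ∑ a, P {m | u + n * σ ≤ |m a - c a|} := tsum_fintype _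
      _ ≤ ∑ a : 𝒜, ENNReal.ofReal (2 * Real.exp (-((u + n * σ) ^ 2) / (2 * σ ^ 2))) :=
          Finset.sum_le_sum fun a _ => hsg a _ htn
      _ = (Fintype.card 𝒜 : ENNReal) *
            ENNReal.ofReal (2 * Real.exp (-((u + n * σ) ^ 2) / (2 * σ ^ 2))) := by
          rw [Finset.sum_const, Finset.card_univ, nsmul_eq_mul]
      _ = ENNReal.ofReal (K * (2 * Real.exp (-((u + n * σ) ^ 2) / (2 * σ ^ 2)))) := by
          rw [ENNReal.ofReal_mul hKpos.le]
          congr 1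
          rw [hKdef]
          simp [ENNReal.ofReal_natCast]
      _ ≤ ENNReal.ofReal (p * Real.exp (-r) ^ n) := ENNReal.ofReal_le_ofReal hreal
  -- geometric sum
  set q : ENNReal := ENNReal.ofReal (Real.exp (-r)) with hq
  have hq2 : Real.exp (-r) ≤ 1 / 2 := by
    have h := Real.exp_le_exp.2 (neg_le_neg hrlog2)
    have h1 : Real.exp (-Real.log 2) = 1 / 2 := by
      rw [Real.exp_neg, Real.exp_log (by norm_num : (0:ℝ) < 2)]
      norm_num
    linarith
  have hgeo : (∑' n : ℕ, q ^ n) ≤ 2 := by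
    rw [ENNReal.tsum_geometric]
    have hq' : q ≤ 2⁻¹ := by
      rw [hq]
      calc ENNReal.ofReal (Real.exp (-r)) ≤ ENNReal.ofReal (1/2) :=
            ENNReal.ofReal_le_ofReal hq2
        _ = 2⁻¹ := by
            rw [show (1:ℝ)/2 = (2:ℝ)⁻¹ by norm_num,
              ENNReal.ofReal_inv_of_pos (by norm_num : (0:ℝ) < 2)]
            norm_num
    have h1 : (2:ENNReal)⁻¹ ≤ 1 - q := by
      have : q + 2⁻¹ ≤ 1 := by
        calc q + 2⁻¹ ≤ 2⁻¹ + 2⁻¹ := add_le_add hq' le_rfl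
          _ = 1 := by rw [ENNReal.inv_two_add_inv_two]
      exact ENNReal.le_sub_of_add_le_right (by rw [hq]; exact ENNReal.ofReal_ne_top) (by rwa [add_comm] at this)
    calc (1 - q)⁻¹ ≤ ((2:ENNReal)⁻¹)⁻¹ := ENNReal.inv_le_inv' h1
      _ = 2 := inv_inv 2
  -- positive part of M - u
  set f : (𝒜 → ℝ) → ℝ := fun m => max (M m - u) 0 with hf
  have hfmeas : Measurable f := (hMmeas.sub measurable_const).max measurable_const
  have hfnonneg : ∀ m, 0 ≤ f m := fun m => le_max_right _ _
  have hMle : ∀ m, M m ≤ u + f m := fun m => by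
    have := le_max_left (M m - u) 0
    rw [hf]; dsimp only; linarith
  -- pointwise layer bound
  have hpt : ∀ m, ENNReal.ofReal (f m) ≤
      ∑' n : ℕ, (S n).indicator (fun _ => ENNReal.ofReal σ) m := by
    intro m
    rcases le_or_gt (M m) u with h | h
    · have : f m = 0 := by rw [hf]; dsimp only; rw [max_eq_right (by linarith)]
      simp [this]
    · set N : ℕ := ⌈(M m - u) / σ⌉₊ with hN
      have hmem : ∀ n ∈ Finset.range N, m ∈ S n := by
        intro n hn
        rw [Finset.mem_range] at hn
        have h1 : (n:ℝ) < (M m - u) / σ := Nat.lt_ceil.1 hn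
        have : u + n * σ ≤ M m := by
          rw [lt_div_iff₀ hσ] at h1
          linarith
        exact this
      have hNσ : f m ≤ N * σ := by
        have h1 : (M m - u) / σ ≤ N := Nat.le_ceil _
        rw [div_le_iff₀ hσ] at h1
        rw [hf]; dsimp only
        rw [max_eq_left (by linarith)]
        linarith
      calc ENNReal.ofReal (f m) ≤ ENNReal.ofReal ((N:ℝ) * σ) := ENNReal.ofReal_le_ofReal hNσ
        _ = (N : ENNReal) * ENNReal.ofReal σ := by
            rw [ENNReal.ofReal_mul (Nat.cast_nonneg N), ENNReal.ofReal_natCast]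
        _ = ∑ n ∈ Finset.range N, (S n).indicator (fun _ => ENNReal.ofReal σ) m := by
            rw [Finset.sum_congr rfl fun n hn => Set.indicator_of_mem (hmem n hn) _]
            rw [Finset.sum_const, Finset.card_range, nsmul_eq_mul]
        _ ≤ ∑' n : ℕ, (S n).indicator (fun _ => ENNReal.ofReal σ) m :=
            ENNReal.sum_le_tsum _
  -- lintegral bound
  have hlint : ∫⁻ m, ENNReal.ofReal (f m) ∂P ≤ ENNReal.ofReal (2 * σ * p) := by
    calc ∫⁻ m, ENNReal.ofReal (f m) ∂P
        ≤ ∫⁻ m, ∑' n : ℕ, (S n).indicator (fun _ => ENNReal.ofReal σ) m ∂P :=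
          lintegral_mono hpt
      _ = ∑' n : ℕ, ∫⁻ m, (S n).indicator (fun _ => ENNReal.ofReal σ) m ∂P :=
          lintegral_tsum fun n => (measurable_const.indicator (hSmeas n)).aemeasurable
      _ = ∑' n : ℕ, ENNReal.ofReal σ * P (S n) := by
          congr 1; funext n
          rw [lintegral_indicator_const (hSmeas n)]
      _ ≤ ∑' n : ℕ, ENNReal.ofReal σ * ENNReal.ofReal (p * Real.exp (-r) ^ n) :=
          ENNReal.tsum_le_tsum fun n => mul_le_mul_right (hStail n) _
      _ = ∑' n : ℕ, ENNReal.ofReal (σ * p) * q ^ n := by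
          congr 1; funext n
          rw [hq, ← ENNReal.ofReal_pow (Real.exp_pos _).le, ← ENNReal.ofReal_mul hσ.le,
            ← ENNReal.ofReal_mul (by positivity : (0:ℝ) ≤ σ * p)]
          congr 1
          ring
      _ = ENNReal.ofReal (σ * p) * ∑' n : ℕ, q ^ n := ENNReal.tsum_mul_left
      _ ≤ ENNReal.ofReal (σ * p) * 2 := mul_le_mul_right hgeo _
      _ = ENNReal.ofReal (2 * σ * p) := by
          rw [show (2:ENNReal) = ENNReal.ofReal 2 from (ENNReal.ofReal_ofNat 2).symm,
            ← ENNReal.ofReal_mul (by positivity : (0:ℝ) ≤ σ * p)]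
          congr 1
          ring
  have hofReal_f : ∀ m, (‖f m‖₊ : ENNReal) = ENNReal.ofReal (f m) := fun m => by
    change (‖f m‖ₑ) = _
    rw [← ofReal_norm, Real.norm_eq_abs, abs_of_nonneg (hfnonneg m)]
  have hfint : Integrable f P := by
    refine ⟨hfmeas.aestronglyMeasurable, ?_⟩
    rw [hasFiniteIntegral_iff_norm]
    have : ∫⁻ m, ENNReal.ofReal ‖f m‖ ∂P = ∫⁻ m, ENNReal.ofReal (f m) ∂P := by
      congr 1; funext m
      rw [Real.norm_eq_abs, abs_of_nonneg (hfnonneg m)]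
    rw [this]
    exact lt_of_le_of_lt hlint ENNReal.ofReal_lt_top
  have hfInt_le : ∫ m, f m ∂P ≤ 2 * σ * p := by
    rw [integral_eq_lintegral_of_nonneg_ae (Filter.Eventually.of_forall hfnonneg)
      hfmeas.aestronglyMeasurable]
    exact ENNReal.toReal_le_of_le_ofReal (by positivity) hlint
  -- per Y bound
  have hYbd : ∀ (Y : {Y : (𝒜 → ℝ) → ℝ // Measurable Y ∧ (∀ ω, Y ω ∈ Set.Icc (0:ℝ) 1) ∧
      ∫ ω, Y ω ∂P ≤ p}),
      ∫ m, mdiam m * Y.1 m ∂P ≤ p * (D + 2 * u + 4 * σ) := by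
    rintro ⟨Y, hYm, hY01, hYle⟩
    dsimp only
    by_cases hInt : Integrable (fun m => mdiam m * Y m) P
    · have hYint : Integrable Y P := by
        refine Integrable.mono' (integrable_const (1:ℝ)) hYm.aestronglyMeasurable
          (Filter.Eventually.of_forall fun m => ?_)
        rw [Real.norm_eq_abs, abs_of_nonneg (hY01 m).1]
        exact (hY01 m).2
      have hfY : Integrable (fun m => f m * Y m) P := by
        refine Integrable.mono' hfint ((hfmeas.mul hYm).aestronglyMeasurable)
          (Filter.Eventually.of_forall fun m => ?_)
        rw [Real.norm_eq_abs, abs_mul, abs_of_nonneg (hfnonneg m),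
          abs_of_nonneg (hY01 m).1]
        exact mul_le_of_le_one_right (hfnonneg m) (hY01 m).2
      have hgint : Integrable (fun m => (D + 2 * u) * Y m + 2 * (f m * Y m)) P :=
        (hYint.const_mul _).add (hfY.const_mul 2)
      have step1 : ∫ m, mdiam m * Y m ∂P
          ≤ ∫ m, ((D + 2 * u) * Y m + 2 * (f m * Y m)) ∂P := by
        refine integral_mono hInt hgint fun m => ?_
        have h1 : mdiam m ≤ D + 2 * u + 2 * f m := by
          have := hdiam m; have := hMle m; linarith
        have h2 : 0 ≤ Y m := (hY01 m).1
        nlinarith [mul_le_mul_of_nonneg_right h1 h2]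
      have step2 : ∫ m, ((D + 2 * u) * Y m + 2 * (f m * Y m)) ∂P
          = (D + 2 * u) * ∫ m, Y m ∂P + 2 * ∫ m, f m * Y m ∂P := by
        rw [integral_add (hYint.const_mul _) (hfY.const_mul 2),
          integral_const_mul, integral_const_mul]
      have h3 : (D + 2 * u) * ∫ m, Y m ∂P ≤ (D + 2 * u) * p :=
        mul_le_mul_of_nonneg_left hYle (by positivity)
      have h4 : ∫ m, f m * Y m ∂P ≤ ∫ m, f m ∂P := by
        refine integral_mono hfY hfint fun m => ?_
        exact mul_le_of_le_one_right (hfnonneg m) (hY01 m).2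
      calc ∫ m, mdiam m * Y m ∂P
          ≤ (D + 2 * u) * ∫ m, Y m ∂P + 2 * ∫ m, f m * Y m ∂P := by
            rw [← step2]; exact step1
        _ ≤ (D + 2 * u) * p + 2 * (2 * σ * p) := by
            have := h4.trans hfInt_le
            linarith
        _ = p * (D + 2 * u + 4 * σ) := by ring
    · rw [integral_undef hInt]
      positivity
  -- conclude
  rw [tailExp, if_pos hp1]
  haveI hne : Nonempty {Y : (𝒜 → ℝ) → ℝ // Measurable Y ∧ (∀ ω, Y ω ∈ Set.Icc (0:ℝ) 1) ∧
      ∫ ω, Y ω ∂P ≤ p} :=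
    ⟨⟨fun _ => 0, measurable_const, fun ω => ⟨le_refl 0, zero_le_one⟩, by simp [hp.le]⟩⟩
  have hsup : (⨆ Y : {Y : (𝒜 → ℝ) → ℝ // Measurable Y ∧ (∀ ω, Y ω ∈ Set.Icc (0:ℝ) 1) ∧
      ∫ ω, Y ω ∂P ≤ p}, ∫ m, mdiam m * Y.1 m ∂P) ≤ p * (D + 2 * u + 4 * σ) :=
    ciSup_le hYbd
  have hfinal : D + 2 * u + 4 * σ ≤ D + σ * (8 + 5 * Real.sqrt L) := by
    have hsplit : Real.sqrt (2 * L) = Real.sqrt 2 * Real.sqrt L := Real.sqrt_mul (by norm_num) L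
    have h2le : Real.sqrt 2 ≤ 2 := by
      nlinarith [Real.sq_sqrt (show (0:ℝ) ≤ 2 by norm_num), Real.sqrt_nonneg 2]
    have hsqL : 0 ≤ Real.sqrt L := Real.sqrt_nonneg L
    rw [hu, hr, hsplit]
    nlinarith [mul_le_mul_of_nonneg_right h2le (mul_nonneg hσ.le hsqL),
      mul_nonneg hσ.le hsqL, hσ.le]
  calc (1 / p) * (⨆ Y : {Y : (𝒜 → ℝ) → ℝ // Measurable Y ∧ (∀ ω, Y ω ∈ Set.Icc (0:ℝ) 1) ∧
        ∫ ω, Y ω ∂P ≤ p}, ∫ m, mdiam m * Y.1 m ∂P)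
      ≤ (1 / p) * (p * (D + 2 * u + 4 * σ)) :=
        mul_le_mul_of_nonneg_left hsup (by positivity)
    _ = D + 2 * u + 4 * σ := by field_simp
    _ ≤ D + σ * (8 + 5 * Real.sqrt L) := hfinal

end
end
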